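/- arXiv:1402.5460 — 11 statements merged into one kernel-verified Lean document; each statement's English description precedes it below -/
import Mathlib

section
/- Define T: ℝ → ℝ by Tx = 0 if |x| ≤ 1, Tx = x - 1 if x > 1, and Tx = x + 1 if x < -1. Then Fix T = {0}, and for every ρ > 0 and every x with |x| ≤ ρ one has |x| ≤ max{ρ,1}·|x - Tx|; however, there is no κ ≥ 0 with |x| ≤ κ|x - Tx| for all x ∈ ℝ. -/
open Metric

/-- The thresholder is boundedly linearly regular but not linearly regular. -/
theorem thresholder_boundedly_linearly_regular_not_linearly_regular
    (T : ℝ → ℝ)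
    (hT : ∀ x : ℝ, T x = if |x| ≤ 1 then 0 else if x > 1 then x - 1 else x + 1) :
    {x : ℝ | T x = x} = {0} ∧
    (∀ ρ > (0:ℝ), ∀ x : ℝ, |x| ≤ ρ → |x| ≤ max ρ 1 * |x - T x|) ∧
    ¬ ∃ κ : ℝ, 0 ≤ κ ∧ ∀ x : ℝ, |x| ≤ κ * |x - T x| := by
  refine ⟨?_, ?_, ?_⟩
  · ext x
    simp only [Set.mem_setOf_eq, Set.mem_singleton_iff, hT x]
    constructor
    · intro h
      by_cases h1 : |x| ≤ 1
      · simpa [h1] using h.symm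
      · by_cases h2 : x > 1 <;> simp [h1, h2] at h <;> linarith
    · intro h; simp [h]
  · intro ρ hρ x hx
    rw [hT x]
    by_cases h1 : |x| ≤ 1
    · simp only [h1, if_true, sub_zero]
      nlinarith [le_max_right ρ 1, abs_nonneg x]
    · push_neg at h1
      by_cases h2 : x > 1
      · simp only [h1.not_ge, if_false, h2, if_true]
        have : x - (x - 1) = 1 := by ring
        rw [this, abs_one, mul_one]
        exact hx.trans (le_max_left ρ 1)
      · simp only [h1.not_ge, if_false, h2, if_false]
        have : x - (x + 1) = -1 := by ring
        rw [this, abs_neg, abs_one, mul_one]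
        exact hx.trans (le_max_left ρ 1)
  · rintro ⟨κ, hκ, h⟩
    have hx := h (κ + 2)
    have h1 : ¬ |κ + 2| ≤ 1 := by rw [abs_of_nonneg (by linarith)]; linarith
    have h2 : κ + 2 > 1 := by linarith
    rw [hT (κ + 2), if_neg h1, if_pos h2] at hx
    have : κ + 2 - (κ + 2 - 1) = 1 := by ring
    rw [this, abs_one, mul_one, abs_of_nonneg (by linarith)] at hx
    linarith
end

section
/- Let T: X → X be a linear nonexpansive operator on a real Hilbert space X such that ran(Id - T) is closed. Then there exists β > 0 such that for all x ∈ X, ‖x - Tx‖ ≥ β·d_{Fix T}(x); i.e., T is linearly regular. -/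
open Metric

/-- A linear nonexpansive operator with closed range of `Id - T` is linearly regular. -/
theorem linear_nonexpansive_closed_range_linearly_regular
    {X : Type*} [NormedAddCommGroup X] [InnerProductSpace ℝ X] [CompleteSpace X]
    (T : X →L[ℝ] X) (hT : ∀ x, ‖T x‖ ≤ ‖x‖)
    (hran : IsClosed (Set.range fun x => x - T x)) :
    ∃ β > (0:ℝ), ∀ x, ‖x - T x‖ ≥ β * infDist x {y | T y = y} := by
  set S : X →L[ℝ] X := ContinuousLinearMap.id ℝ X - T with hS
  have hSx : ∀ x, S x = x - T x := fun x => rfl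
  set R : Submodule ℝ X := LinearMap.range (S : X →ₗ[ℝ] X) with hR
  have hRclosed : IsClosed (R : Set X) := by
    have : (R : Set X) = Set.range fun x => x - T x := by
      ext y; simp [hR, LinearMap.mem_range, hSx]
    rw [this]; exact hran
  haveI : CompleteSpace R := hRclosed.completeSpace_coe
  set Sc : X →L[ℝ] R := S.codRestrict R (fun x => LinearMap.mem_range_self _ x) with hSc
  have hsurj : Function.Surjective Sc := by
    rintro ⟨y, hy⟩
    obtain ⟨x, hx⟩ := hy
    exact ⟨x, Subtype.ext hx⟩
  obtain ⟨C, hC, hCle⟩ := Sc.exists_preimage_norm_le hsurj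
  refine ⟨1 / C, by positivity, fun x => ?_⟩
  obtain ⟨x', hx', hx'le⟩ := hCle (Sc x)
  have hnorm : ‖(Sc x : X)‖ = ‖x - T x‖ := by rw [ContinuousLinearMap.coe_codRestrict_apply, hSx]
  have hfix : T (x - x') = x - x' := by
    have h1 : S x' = S x := congrArg Subtype.val hx'
    have h2 : S (x - x') = 0 := by rw [map_sub, h1, sub_self]
    rw [hSx] at h2
    exact (sub_eq_zero.mp h2).symm
  have hd : infDist x {y | T y = y} ≤ C * ‖x - T x‖ := by
    calc infDist x {y | T y = y} ≤ dist x (x - x') :=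
          infDist_le_dist_of_mem (by simpa using hfix)
      _ = ‖x'‖ := by rw [dist_eq_norm, sub_sub_cancel]
      _ ≤ C * ‖(Sc x : X)‖ := hx'le
      _ = C * ‖x - T x‖ := by rw [hnorm]
  rw [ge_iff_le, div_mul_eq_mul_div, div_le_iff₀ hC]
  linarith [hd]
end

section
/- Suppose X = ℝ², let θ ∈ (0, π/2], U = ℝ·(1,0), V = ℝ·(cos θ, sin θ), and let T = P_V P_U + P_{V^⊥} P_{U^⊥} be the Douglas–Rachford operator for the two lines. Then Fix T = {0} and ‖x - Tx‖ = sin(θ)·‖x‖ for all x ∈ ℝ²; hence T is linearly regular with constant 1/sin(θ). -/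
open Metric Real

/-- The Douglas–Rachford operator for two lines in the plane meeting at angle θ. -/
theorem dr_two_lines_linearly_regular
    (θ : ℝ) (hθ : θ ∈ Set.Ioc 0 (π / 2))
    (U V : Submodule ℝ (EuclideanSpace ℝ (Fin 2)))
    (hU : U = Submodule.span ℝ {(WithLp.equiv 2 (Fin 2 → ℝ)).symm ![1, 0]})
    (hV : V = Submodule.span ℝ {(WithLp.equiv 2 (Fin 2 → ℝ)).symm ![Real.cos θ, Real.sin θ]})
    (T : EuclideanSpace ℝ (Fin 2) → EuclideanSpace ℝ (Fin 2))
    (hT : ∀ x, T x =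
      (V.orthogonalProjectionOnto (U.orthogonalProjectionOnto x) : EuclideanSpace ℝ (Fin 2)) +
      (Vᗮ.orthogonalProjectionOnto (Uᗮ.orthogonalProjectionOnto x) : EuclideanSpace ℝ (Fin 2))) :
    {x : EuclideanSpace ℝ (Fin 2) | T x = x} = {0} ∧
    (∀ x : EuclideanSpace ℝ (Fin 2), ‖x - T x‖ = Real.sin θ * ‖x‖) ∧
    ∀ x : EuclideanSpace ℝ (Fin 2),
      infDist x {x : EuclideanSpace ℝ (Fin 2) | T x = x} ≤ (1 / Real.sin θ) * ‖x - T x‖ := by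
  obtain ⟨hθ0, hθ2⟩ := hθ
  have hs : 0 < Real.sin θ :=
    Real.sin_pos_of_pos_of_lt_pi hθ0 (lt_of_le_of_lt hθ2 (by linarith [Real.pi_pos]))
  have hcs : Real.cos θ ^ 2 + Real.sin θ ^ 2 = 1 := Real.cos_sq_add_sin_sq θ
  set u : EuclideanSpace ℝ (Fin 2) := (WithLp.equiv 2 (Fin 2 → ℝ)).symm ![1, 0] with hu
  set v : EuclideanSpace ℝ (Fin 2) :=
    (WithLp.equiv 2 (Fin 2 → ℝ)).symm ![Real.cos θ, Real.sin θ] with hv'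
  have hnu : ‖u‖ = 1 := by
    rw [EuclideanSpace.norm_eq]
    simp [hu, Fin.sum_univ_two]
  have hnv : ‖v‖ = 1 := by
    rw [EuclideanSpace.norm_eq]
    simp [hv', Fin.sum_univ_two, sq_abs, hcs]
  have hsub : ∀ x : EuclideanSpace ℝ (Fin 2), x - T x =
      Real.sin θ • ((WithLp.equiv 2 (Fin 2 → ℝ)).symm
        ![Real.sin θ * x 0 + Real.cos θ * x 1, Real.sin θ * x 1 - Real.cos θ * x 0]) := by
    intro x
    rw [hT x, hU, hV]
    ext i
    simp only [← Submodule.starProjection_apply, Submodule.starProjection_orthogonal_val,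
      Submodule.starProjection_singleton,
      PiLp.sub_apply, PiLp.add_apply, PiLp.smul_apply, smul_eq_mul, hnu, hnv,
      PiLp.inner_apply, RCLike.inner_apply, starRingEnd_apply, star_trivial]
    fin_cases i
    · simp only [hu, hv', Fin.sum_univ_two]
      simp [Matrix.cons_val_zero, Matrix.cons_val_one]
      linear_combination (-(x 0)) * hcs
    · simp only [hu, hv', Fin.sum_univ_two]
      simp [Matrix.cons_val_zero, Matrix.cons_val_one]
      ring
  have hnorm : ∀ x : EuclideanSpace ℝ (Fin 2), ‖x - T x‖ = Real.sin θ * ‖x‖ := by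
    intro x
    rw [hsub x, norm_smul, Real.norm_eq_abs, abs_of_pos hs]
    congr 1
    rw [EuclideanSpace.norm_eq, EuclideanSpace.norm_eq]
    congr 1
    simp [Fin.sum_univ_two, sq_abs]
    linear_combination (x 0 ^ 2 + x 1 ^ 2) * hcs
  have hfix : {x : EuclideanSpace ℝ (Fin 2) | T x = x} = {0} := by
    ext x
    simp only [Set.mem_setOf_eq, Set.mem_singleton_iff]
    constructor
    · intro h
      have h0 : ‖x - T x‖ = 0 := by rw [h]; simp
      rw [hnorm x] at h0
      have := mul_eq_zero.mp h0
      rcases this with h1 | h1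
      · exact absurd h1 (ne_of_gt hs)
      · exact norm_eq_zero.mp h1
    · rintro rfl
      have h0 : ‖(0 : EuclideanSpace ℝ (Fin 2)) - T 0‖ = 0 := by rw [hnorm]; simp
      have := norm_eq_zero.mp h0
      exact (sub_eq_zero.mp this).symm
  refine ⟨hfix, hnorm, fun x => ?_⟩
  rw [hfix, hnorm x, infDist_singleton]
  rw [dist_zero_right]
  rw [one_div, ← mul_assoc, inv_mul_cancel₀ (ne_of_gt hs), one_mul]
end

section
/- Let S: X → X be linear with S* = -S and ‖Sx‖ = ‖x‖ for all x, let α ∈ (0, π/2], β ∈ (-1,1), and set T = β(cos(α)Id + sin(α)S). Then ‖Tx‖ = |β|‖x‖ for all x, ⟨x, Tx⟩ = cos(α)‖x‖‖Tx‖ for all x with β ≥ 0, Fix T = {0}, and T is linearly regular. -/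
open Metric

/-- Scaled rotation-type operator built from a skew isometry is linearly regular. -/
theorem skew_rotation_linearly_regular
    {X : Type*} [NormedAddCommGroup X] [InnerProductSpace ℝ X]
    (S : X →L[ℝ] X)
    (hskew : ∀ x y : X, (inner ℝ (S x) y : ℝ) = -(inner ℝ x (S y) : ℝ))
    (hiso : ∀ x : X, ‖S x‖ = ‖x‖)
    (α : ℝ) (hα : α ∈ Set.Ioc 0 (Real.pi / 2))
    (β : ℝ) (hβ : β ∈ Set.Ioo (-1 : ℝ) 1)
    (T : X → X)
    (hT : ∀ x, T x = β • (Real.cos α • x + Real.sin α • S x)) :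
    (∀ x, ‖T x‖ = |β| * ‖x‖) ∧
    (0 ≤ β → ∀ x, (inner ℝ x (T x) : ℝ) = Real.cos α * ‖x‖ * ‖T x‖) ∧
    {x | T x = x} = {0} ∧
    ∃ κ ≥ (0:ℝ), ∀ x, infDist x {x | T x = x} ≤ κ * ‖x - T x‖ := by
  have hxSx : ∀ x : X, (inner ℝ x (S x) : ℝ) = 0 := by
    intro x
    have h1 := hskew x x
    have h2 : (inner ℝ (S x) x : ℝ) = inner ℝ x (S x) := real_inner_comm _ _
    linarith [h1, h2]
  have hvnorm : ∀ x : X, ‖Real.cos α • x + Real.sin α • S x‖ = ‖x‖ := by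
    intro x
    have hsq : ‖Real.cos α • x + Real.sin α • S x‖ ^ 2 = ‖x‖ ^ 2 := by
      rw [@norm_add_sq_real]
      rw [real_inner_smul_left, real_inner_smul_right, hxSx]
      rw [norm_smul, norm_smul, hiso]
      have := Real.sin_sq_add_cos_sq α
      simp [mul_pow, abs_mul_abs_self]
      ring_nf
      nlinarith [this]
    have h1 : (0:ℝ) ≤ ‖Real.cos α • x + Real.sin α • S x‖ := norm_nonneg _
    have h2 : (0:ℝ) ≤ ‖x‖ := norm_nonneg _
    nlinarith
  have hTn : ∀ x, ‖T x‖ = |β| * ‖x‖ := by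
    intro x
    rw [hT, norm_smul, hvnorm, Real.norm_eq_abs]
  have hβlt : |β| < 1 := abs_lt.mpr hβ
  refine ⟨hTn, ?_, ?_, ?_⟩
  · intro hb x
    rw [hT]
    rw [real_inner_smul_right, inner_add_right, real_inner_smul_right,
      real_inner_smul_right, hxSx, real_inner_self_eq_norm_mul_norm]
    rw [norm_smul, hvnorm, Real.norm_eq_abs, abs_of_nonneg hb]
    ring
  · ext x
    simp only [Set.mem_setOf_eq, Set.mem_singleton_iff]
    constructor
    · intro hx
      have : ‖x‖ = |β| * ‖x‖ := by rw [← hTn x, hx]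
      have : (1 - |β|) * ‖x‖ = 0 := by linarith
      have hne : (1 - |β|) ≠ 0 := by linarith
      have := mul_eq_zero.mp this
      rcases this with h | h
      · exact absurd h hne
      · exact norm_eq_zero.mp h
    · intro hx
      subst hx
      rw [hT]
      simp
  · refine ⟨(1 - |β|)⁻¹, inv_nonneg.mpr (by linarith), ?_⟩
    intro x
    have hset : {x | T x = x} = ({0} : Set X) := by
      ext y
      simp only [Set.mem_setOf_eq, Set.mem_singleton_iff]
      constructor
      · intro hx
        have : ‖y‖ = |β| * ‖y‖ := by rw [← hTn y, hx]
        have h0 : (1 - |β|) * ‖y‖ = 0 := by linarith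
        have hne : (1 - |β|) ≠ 0 := by linarith
        rcases mul_eq_zero.mp h0 with h | h
        · exact absurd h hne
        · exact norm_eq_zero.mp h
      · intro hx; subst hx; rw [hT]; simp
    rw [hset, infDist_singleton, dist_zero_right]
    have h1 : ‖x‖ - ‖T x‖ ≤ ‖x - T x‖ := norm_sub_norm_le _ _
    have h2 : ‖T x‖ = |β| * ‖x‖ := hTn x
    have h3 : (1 - |β|) * ‖x‖ ≤ ‖x - T x‖ := by rw [h2] at h1; linarith
    calc ‖x‖ = (1 - |β|)⁻¹ * ((1 - |β|) * ‖x‖) := by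
          rw [inv_mul_cancel_left₀ (by linarith)]
      _ ≤ (1 - |β|)⁻¹ * ‖x - T x‖ :=
          mul_le_mul_of_nonneg_left h3 (inv_nonneg.mpr (by linarith))
end

section
/- Let T: X → X be averaged nonexpansive, boundedly linearly regular with constant κ (on a given ball), and let σ > 0 satisfy σ‖x-Tx‖² ≤ d_{Fix T}(x)² - d_{Fix T}(Tx)² on that ball. Then for α = √(σ^{-1}κ² / (1 + σ^{-1}κ²)) ∈ [0,1), every x in the ball satisfies d_{Fix T}(Tx) ≤ α·d_{Fix T}(x). -/
open Metric

/-- Key inequality (contraction of distances to the fixed point set) on a ball. -/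
theorem distance_contraction_on_ball
    {X : Type*} [NormedAddCommGroup X] [InnerProductSpace ℝ X]
    (T : X → X)
    (havg : ∃ (lam : ℝ) (N : X → X), lam ∈ Set.Ico (0:ℝ) 1 ∧
      (∀ x y, ‖N x - N y‖ ≤ ‖x - y‖) ∧ ∀ x, T x = (1 - lam) • x + lam • N x)
    (Z : Set X) (hZ : Z = {x | T x = x}) (hZne : Z.Nonempty)
    (ρ : ℝ) (hρ : 0 < ρ)
    (κ : ℝ) (hκ : 0 ≤ κ)
    (hreg : ∀ x ∈ closedBall (0:X) ρ, infDist x Z ≤ κ * ‖x - T x‖)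
    (σ : ℝ) (hσ : 0 < σ)
    (hav : ∀ x ∈ closedBall (0:X) ρ,
      σ * ‖x - T x‖ ^ 2 ≤ infDist x Z ^ 2 - infDist (T x) Z ^ 2) :
    Real.sqrt (σ⁻¹ * κ ^ 2 / (1 + σ⁻¹ * κ ^ 2)) ∈ Set.Ico (0:ℝ) 1 ∧
    ∀ x ∈ closedBall (0:X) ρ,
      infDist (T x) Z ≤ Real.sqrt (σ⁻¹ * κ ^ 2 / (1 + σ⁻¹ * κ ^ 2)) * infDist x Z := by
  have hc0 : 0 ≤ σ⁻¹ * κ ^ 2 := by positivity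
  set c := σ⁻¹ * κ ^ 2 with hc
  have h1c : (0:ℝ) < 1 + c := by linarith
  constructor
  · refine ⟨Real.sqrt_nonneg _, ?_⟩
    have hlt : c / (1 + c) < 1 := (div_lt_one h1c).2 (by linarith)
    have := Real.sqrt_lt_sqrt (by positivity) hlt
    simpa [Real.sqrt_one] using this
  · intro x hx
    have hdx : 0 ≤ infDist x Z := infDist_nonneg
    have hdTx : 0 ≤ infDist (T x) Z := infDist_nonneg
    have h1 := hreg x hx
    have h2 := hav x hx
    have hsq : infDist x Z ^ 2 ≤ κ ^ 2 * ‖x - T x‖ ^ 2 := by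
      have := pow_le_pow_left₀ hdx h1 2
      calc infDist x Z ^ 2 ≤ (κ * ‖x - T x‖) ^ 2 := this
        _ = κ ^ 2 * ‖x - T x‖ ^ 2 := by ring
    have heq : κ ^ 2 * ‖x - T x‖ ^ 2 = c * (σ * ‖x - T x‖ ^ 2) := by
      rw [hc]; field_simp
    have h3 : infDist x Z ^ 2 ≤ c * (infDist x Z ^ 2 - infDist (T x) Z ^ 2) := by
      calc infDist x Z ^ 2 ≤ κ ^ 2 * ‖x - T x‖ ^ 2 := hsq
        _ = c * (σ * ‖x - T x‖ ^ 2) := heq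
        _ ≤ c * (infDist x Z ^ 2 - infDist (T x) Z ^ 2) :=
            mul_le_mul_of_nonneg_left h2 hc0
    have hmono : infDist (T x) Z ^ 2 ≤ infDist x Z ^ 2 := by
      nlinarith [sq_nonneg ‖x - T x‖]
    have key : (1 + c) * infDist (T x) Z ^ 2 ≤ c * infDist x Z ^ 2 := by nlinarith
    have key2 : infDist (T x) Z ^ 2 ≤ (c / (1 + c)) * infDist x Z ^ 2 := by
      rw [div_mul_eq_mul_div, le_div_iff₀ h1c]; nlinarith
    calc infDist (T x) Z = Real.sqrt (infDist (T x) Z ^ 2) := by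
          rw [Real.sqrt_sq hdTx]
      _ ≤ Real.sqrt ((c / (1 + c)) * infDist x Z ^ 2) := Real.sqrt_le_sqrt key2
      _ = Real.sqrt (c / (1 + c)) * infDist x Z := by
          rw [Real.sqrt_mul (by positivity), Real.sqrt_sq hdx]
end

section
/- Let (x_n) be a sequence in a real Hilbert space X that is Fejér monotone with respect to a nonempty closed convex set C (i.e., ‖x_{n+1} - c‖ ≤ ‖x_n - c‖ for all c ∈ C, n ∈ ℕ). Suppose there exists α ∈ [0,1) with d_C(x_{n+1}) ≤ α·d_C(x_n) for all n. Then (x_n) converges strongly to some point x̄ ∈ C, and ‖x_n - x̄‖ ≤ 2α^n d_C(x_0) for all n. -/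
open Metric Filter

/-- Linear convergence of Fejér monotone sequences with geometric decrease of distance. -/
theorem fejer_monotone_linear_convergence
    {X : Type*} [NormedAddCommGroup X] [InnerProductSpace ℝ X] [CompleteSpace X]
    (C : Set X) (hCne : C.Nonempty) (hCc : IsClosed C) (hconv : Convex ℝ C)
    (x : ℕ → X)
    (hfejer : ∀ c ∈ C, ∀ n : ℕ, ‖x (n + 1) - c‖ ≤ ‖x n - c‖)
    (α : ℝ) (hα : α ∈ Set.Ico (0:ℝ) 1)
    (hd : ∀ n : ℕ, infDist (x (n + 1)) C ≤ α * infDist (x n) C) :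
    ∃ xbar ∈ C, Tendsto x atTop (nhds xbar) ∧
      ∀ n : ℕ, ‖x n - xbar‖ ≤ 2 * α ^ n * infDist (x 0) C := by
  obtain ⟨hα0, hα1⟩ := hα
  set d0 := infDist (x 0) C with hd0
  have hd0nn : 0 ≤ d0 := infDist_nonneg
  -- geometric decrease
  have hgeom : ∀ n, infDist (x n) C ≤ α ^ n * d0 := by
    intro n
    induction n with
    | zero => simp [hd0]
    | succ n ih =>
        calc infDist (x (n + 1)) C ≤ α * infDist (x n) C := hd n
          _ ≤ α * (α ^ n * d0) := by
              exact mul_le_mul_of_nonneg_left ih hα0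
          _ = α ^ (n + 1) * d0 := by ring
  -- extended Fejér monotonicity
  have hfej' : ∀ c ∈ C, ∀ n k, ‖x (n + k) - c‖ ≤ ‖x n - c‖ := by
    intro c hc n k
    induction k with
    | zero => simp
    | succ k ih => exact le_trans (hfejer c hc (n + k)) ih
  -- key bound
  have hkey : ∀ n m, n ≤ m → dist (x m) (x n) ≤ 2 * infDist (x n) C := by
    intro n m hnm
    refine le_of_forall_pos_le_add ?_
    intro ε hε
    obtain ⟨c, hc, hcd⟩ := (infDist_lt_iff hCne).1
      (show infDist (x n) C < infDist (x n) C + ε / 2 by linarith)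
    obtain ⟨k, rfl⟩ := Nat.exists_eq_add_of_le hnm
    have h1 : dist (x (n + k)) c ≤ dist (x n) c := by
      simpa [dist_eq_norm] using hfej' c hc n k
    calc dist (x (n + k)) (x n) ≤ dist (x (n + k)) c + dist c (x n) :=
          dist_triangle _ _ _
      _ ≤ dist (x n) c + dist (x n) c := by
          rw [dist_comm c (x n)]; linarith
      _ ≤ 2 * infDist (x n) C + ε := by linarith
  -- Cauchy
  have hcauchy : CauchySeq x := by
    apply cauchySeq_of_le_geometric α (2 * d0) hα1
    intro n
    calc dist (x n) (x (n + 1)) ≤ 2 * infDist (x n) C := by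
          rw [dist_comm]; exact hkey n (n + 1) (Nat.le_succ n)
      _ ≤ 2 * (α ^ n * d0) := by
          have := hgeom n; linarith
      _ = 2 * d0 * α ^ n := by ring
  obtain ⟨xbar, hxbar⟩ := cauchySeq_tendsto_of_complete hcauchy
  -- infDist (x n) C → 0
  have htend0 : Tendsto (fun n => infDist (x n) C) atTop (nhds 0) := by
    have hg : Tendsto (fun n => α ^ n * d0) atTop (nhds 0) := by
      have := tendsto_pow_atTop_nhds_zero_of_lt_one hα0 hα1
      simpa using this.mul_const d0
    exact squeeze_zero (fun n => infDist_nonneg) hgeom hg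
  have hmem : xbar ∈ C := by
    have h1 : Tendsto (fun n => infDist (x n) C) atTop (nhds (infDist xbar C)) :=
      ((continuous_infDist_pt C).continuousAt.tendsto.comp hxbar)
    have : infDist xbar C = 0 := tendsto_nhds_unique h1 htend0
    exact hCc.mem_iff_infDist_zero hCne |>.2 this
  refine ⟨xbar, hmem, hxbar, ?_⟩
  intro n
  have h1 : Tendsto (fun m => dist (x m) (x n)) atTop (nhds (dist xbar (x n))) :=
    (Filter.Tendsto.dist hxbar tendsto_const_nhds)
  have h2 : dist xbar (x n) ≤ 2 * (α ^ n * d0) := by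
    refine le_of_tendsto h1 ?_
    filter_upwards [eventually_ge_atTop n] with m hm
    exact le_trans (hkey n m hm) (by have := hgeom n; linarith)
  calc ‖x n - xbar‖ = dist xbar (x n) := by rw [dist_comm, dist_eq_norm]
    _ ≤ 2 * (α ^ n * d0) := h2
    _ = 2 * α ^ n * d0 := by ring
end

section
/- Let T: X → X be averaged nonexpansive and boundedly linearly regular with Fix T ≠ ∅. Then for every x₀ ∈ X, the orbit (T^n x₀) converges strongly, with a linear rate, to some point x̄ ∈ Fix T. -/
open Metric Filter

lemma convex_norm_sq_aux {X : Type*} [NormedAddCommGroup X] [InnerProductSpace ℝ X]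
    (lam : ℝ) (a b : X) :
    ‖(1-lam)•a + lam•b‖^2
      = (1-lam)*‖a‖^2 + lam*‖b‖^2 - lam*(1-lam)*‖a-b‖^2 := by
  have h : ∀ v : X, ‖v‖^2 = inner ℝ v v := fun v => (real_inner_self_eq_norm_sq v).symm
  simp only [h, inner_add_left, inner_add_right, inner_sub_left, inner_sub_right,
    real_inner_smul_left, real_inner_smul_right]
  rw [real_inner_comm b a]
  ring

set_option maxHeartbeats 1000000 in
/-- Linear convergence of orbits of averaged, boundedly linearly regular operators. -/
theorem averaged_blr_orbit_linear_convergence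
    {X : Type*} [NormedAddCommGroup X] [InnerProductSpace ℝ X] [CompleteSpace X]
    (T : X → X)
    (havg : ∃ (lam : ℝ) (N : X → X), lam ∈ Set.Ico (0:ℝ) 1 ∧
      (∀ x y, ‖N x - N y‖ ≤ ‖x - y‖) ∧ ∀ x, T x = (1 - lam) • x + lam • N x)
    (hblr : ∀ ρ > (0:ℝ), ∃ κ ≥ (0:ℝ), ∀ x : X, ‖x‖ ≤ ρ →
      infDist x {z | T z = z} ≤ κ * ‖x - T x‖)
    (hfix : {z | T z = z}.Nonempty) :
    ∀ x₀ : X, ∃ xbar, T xbar = xbar ∧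
      Tendsto (fun n => T^[n] x₀) atTop (nhds xbar) ∧
      ∃ M ≥ (0:ℝ), ∃ α ∈ Set.Ico (0:ℝ) 1, ∀ n : ℕ, ‖T^[n] x₀ - xbar‖ ≤ M * α ^ n := by
  intro x₀
  obtain ⟨lam, N, hlam, hN, hT⟩ := havg
  obtain ⟨z₀, hz₀⟩ := hfix
  by_cases hlam0 : lam = 0
  · -- T is the identity
    have hTid : ∀ x, T x = x := by intro x; simp [hT, hlam0]
    have hiter : ∀ n, T^[n] x₀ = x₀ := fun n => Function.iterate_fixed (hTid x₀) n
    refine ⟨x₀, hTid x₀, ?_, 0, le_refl 0, 0, ⟨le_refl 0, one_pos⟩, ?_⟩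
    · simp only [hiter]; exact tendsto_const_nhds
    · intro n; simp [hiter n]
  · have hlampos : 0 < lam := lt_of_le_of_ne hlam.1 (Ne.symm hlam0)
    have hlam1 : lam < 1 := hlam.2
    set F := {z : X | T z = z} with hFdef
    have hFne : F.Nonempty := ⟨z₀, hz₀⟩
    set c := (1 - lam) / lam with hc
    have hcpos : 0 < c := div_pos (by linarith) hlampos
    -- T is nonexpansive
    have hTne : ∀ x y : X, ‖T x - T y‖ ≤ ‖x - y‖ := by
      intro x y
      have e : T x - T y = (1-lam) • (x - y) + lam • (N x - N y) := by
        rw [hT x, hT y]; module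
      calc ‖T x - T y‖ ≤ ‖(1-lam) • (x - y)‖ + ‖lam • (N x - N y)‖ := by
            rw [e]; exact norm_add_le _ _
        _ = (1-lam) * ‖x - y‖ + lam * ‖N x - N y‖ := by
            rw [norm_smul, norm_smul, Real.norm_eq_abs, Real.norm_eq_abs,
              abs_of_nonneg (by linarith : (0:ℝ) ≤ 1 - lam), abs_of_nonneg hlampos.le]
        _ ≤ (1-lam) * ‖x - y‖ + lam * ‖x - y‖ := by
            have := hN x y; nlinarith
        _ = ‖x - y‖ := by ring
    -- key inequality
    have hkey : ∀ z ∈ F, ∀ x : X, ‖T x - z‖^2 + c * ‖x - T x‖^2 ≤ ‖x - z‖^2 := by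
      intro z hz x
      have hz' : T z = z := hz
      have hNz : N z = z := by
        have h1 : (1 - lam) • z + lam • N z = z := by rw [← hT]; exact hz'
        have h2 : lam • N z = lam • z := by
          have : lam • N z - lam • z = 0 := by
            have := h1; rw [sub_eq_zero]; linear_combination (norm := module) h1
          rwa [sub_eq_zero] at this
        exact smul_right_injective X hlam0 h2
      have e1 : T x - z = (1-lam) • (x - z) + lam • (N x - z) := by rw [hT x]; module
      have e2 : (x - z) - (N x - z) = x - N x := by abel
      have e3 : x - T x = lam • (x - N x) := by rw [hT x]; module
      have hid : ‖T x - z‖^2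
          = (1-lam) * ‖x - z‖^2 + lam * ‖N x - z‖^2 - lam*(1-lam) * ‖x - N x‖^2 := by
        rw [e1, convex_norm_sq_aux, e2]
      have hns : ‖x - T x‖^2 = lam^2 * ‖x - N x‖^2 := by
        rw [e3, norm_smul, Real.norm_eq_abs, abs_of_nonneg hlampos.le, mul_pow]
      have hNle : ‖N x - z‖ ≤ ‖x - z‖ := by
        have := hN x z; rwa [hNz] at this
      have hc2 : c * ‖x - T x‖^2 = lam * (1-lam) * ‖x - N x‖^2 := by
        rw [hns, hc]; field_simp
      have hsq : ‖N x - z‖^2 ≤ ‖x - z‖^2 := by nlinarith [norm_nonneg (N x - z)]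
      nlinarith
    -- the orbit
    set x : ℕ → X := fun n => T^[n] x₀ with hx
    have hxsucc : ∀ n, x (n+1) = T (x n) := by
      intro n; simp [hx, Function.iterate_succ_apply']
    -- boundedness
    have hbd : ∀ n, ‖x n - z₀‖ ≤ ‖x₀ - z₀‖ := by
      intro n; induction n with
      | zero => simp [hx]
      | succ n ih =>
        rw [hxsucc n]
        calc ‖T (x n) - z₀‖ = ‖T (x n) - T z₀‖ := by rw [hz₀]
          _ ≤ ‖x n - z₀‖ := hTne _ _
          _ ≤ ‖x₀ - z₀‖ := ih
    set ρ := ‖x₀ - z₀‖ + ‖z₀‖ + 1 with hρ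
    have hρpos : 0 < ρ := by positivity
    have hxbd : ∀ n, ‖x n‖ ≤ ρ := by
      intro n
      calc ‖x n‖ = ‖(x n - z₀) + z₀‖ := by rw [sub_add_cancel]
        _ ≤ ‖x n - z₀‖ + ‖z₀‖ := norm_add_le _ _
        _ ≤ ρ := by have := hbd n; rw [hρ]; linarith
    obtain ⟨κ₀, hκ₀, hκ₀prop⟩ := hblr ρ hρpos
    set κ := max κ₀ 1 with hκdef
    have hκ1 : (1:ℝ) ≤ κ := le_max_right _ _
    have hκpos : (0:ℝ) < κ := lt_of_lt_of_le one_pos hκ1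
    have hκprop : ∀ n, infDist (x n) F ≤ κ * ‖x n - T (x n)‖ := by
      intro n
      calc infDist (x n) F ≤ κ₀ * ‖x n - T (x n)‖ := hκ₀prop (x n) (hxbd n)
        _ ≤ κ * ‖x n - T (x n)‖ :=
          mul_le_mul_of_nonneg_right (le_max_left _ _) (norm_nonneg _)
    set d : ℕ → ℝ := fun n => infDist (x n) F with hd
    have hdnn : ∀ n, 0 ≤ d n := fun n => infDist_nonneg
    -- key recursion
    have hrec : ∀ n, (d (n+1))^2 + c * ‖x n - T (x n)‖^2 ≤ (d n)^2 := by
      intro n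
      have hall : ∀ ε > (0:ℝ), (d (n+1))^2 + c * ‖x n - T (x n)‖^2 ≤ (d n + ε)^2 := by
        intro ε hε
        have hlt : infDist (x n) F < d n + ε := by
          have : d n < d n + ε := by linarith
          exact this
        obtain ⟨z, hzF, hzd⟩ := (infDist_lt_iff hFne).mp hlt
        have h1 : d (n+1) ≤ ‖x (n+1) - z‖ := by
          have := infDist_le_dist_of_mem (x := x (n+1)) hzF
          rwa [dist_eq_norm] at this
        have h2 : ‖x (n+1) - z‖^2 + c * ‖x n - T (x n)‖^2 ≤ ‖x n - z‖^2 := by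
          rw [hxsucc n]; exact hkey z hzF (x n)
        have h3 : ‖x n - z‖ < d n + ε := by rwa [dist_eq_norm] at hzd
        have h4 : ‖x n - z‖^2 ≤ (d n + ε)^2 := by nlinarith [norm_nonneg (x n - z)]
        nlinarith [hdnn (n+1), norm_nonneg (x (n+1) - z)]
      refine le_of_forall_pos_le_add ?_
      intro ε hε
      set δ := min 1 (ε / (2 * d n + 1)) with hδ
      have hδpos : 0 < δ := lt_min one_pos (div_pos hε (by nlinarith [hdnn n]))
      have hδ1 : δ ≤ 1 := min_le_left _ _
      have hδ2 : δ ≤ ε / (2 * d n + 1) := min_le_right _ _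
      have hpos1 : (0:ℝ) < 2 * d n + 1 := by nlinarith [hdnn n]
      have hδ3 : δ * (2 * d n + 1) ≤ ε := by
        calc δ * (2 * d n + 1) ≤ (ε / (2 * d n + 1)) * (2 * d n + 1) :=
              mul_le_mul_of_nonneg_right hδ2 hpos1.le
          _ = ε := by field_simp
      have := hall δ hδpos
      nlinarith [hdnn n]
    -- geometric rate for d
    set γ := max 0 (1 - c / κ^2) with hγ
    have hγnn : 0 ≤ γ := le_max_left _ _
    have hγ1 : γ < 1 := by
      apply max_lt one_pos
      have : 0 < c / κ^2 := div_pos hcpos (by positivity)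
      linarith
    set α := Real.sqrt γ with hα
    have hαnn : 0 ≤ α := Real.sqrt_nonneg _
    have hα1 : α < 1 := by
      rw [hα, show (1:ℝ) = Real.sqrt 1 by simp]
      exact Real.sqrt_lt_sqrt hγnn hγ1
    have hstep : ∀ n, d (n+1) ≤ α * d n := by
      intro n
      have h1 : (d n)^2 ≤ κ^2 * ‖x n - T (x n)‖^2 := by
        have := hκprop n
        nlinarith [hdnn n, norm_nonneg (x n - T (x n))]
      have hκ2 : (0:ℝ) < κ^2 := by positivity
      have h2 : (d (n+1))^2 * κ^2 ≤ (κ^2 - c) * (d n)^2 := by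
        nlinarith [mul_le_mul_of_nonneg_left h1 hcpos.le,
          mul_le_mul_of_nonneg_left (hrec n) hκ2.le]
      have hγκ : κ^2 - c ≤ γ * κ^2 := by
        have h5 : 1 - c / κ^2 ≤ γ := le_max_right _ _
        have h6 : (1 - c / κ^2) * κ^2 = κ^2 - c := by field_simp
        nlinarith
      have h3 : (d (n+1))^2 ≤ γ * (d n)^2 := by
        rw [← mul_le_mul_iff_of_pos_right hκ2]
        calc (d (n+1))^2 * κ^2 ≤ (κ^2 - c) * (d n)^2 := h2
          _ ≤ γ * κ^2 * (d n)^2 := mul_le_mul_of_nonneg_right hγκ (sq_nonneg _)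
          _ = γ * (d n)^2 * κ^2 := by ring
      calc d (n+1) = Real.sqrt ((d (n+1))^2) := (Real.sqrt_sq (hdnn _)).symm
        _ ≤ Real.sqrt (γ * (d n)^2) := Real.sqrt_le_sqrt h3
        _ = α * d n := by
          rw [Real.sqrt_mul hγnn, Real.sqrt_sq (hdnn n)]
    have hdgeo : ∀ n, d n ≤ d 0 * α ^ n := by
      intro n; induction n with
      | zero => simp
      | succ n ih =>
        calc d (n+1) ≤ α * d n := hstep n
          _ ≤ α * (d 0 * α ^ n) := mul_le_mul_of_nonneg_left ih hαnn
          _ = d 0 * α ^ (n+1) := by ring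
    -- displacement bound
    set C := d 0 / Real.sqrt c with hC
    have hCnn : 0 ≤ C := div_nonneg (hdnn 0) (Real.sqrt_nonneg _)
    have hdisp : ∀ n, dist (x n) (x (n+1)) ≤ C * α ^ n := by
      intro n
      have h1 : c * ‖x n - T (x n)‖^2 ≤ (d n)^2 := by
        have := hrec n; nlinarith [hdnn (n+1)]
      have h2 : ‖x n - T (x n)‖ ≤ d n / Real.sqrt c := by
        rw [le_div_iff₀ (Real.sqrt_pos.mpr hcpos)]
        have h3 : (‖x n - T (x n)‖ * Real.sqrt c)^2 ≤ (d n)^2 := by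
          rw [mul_pow, Real.sq_sqrt hcpos.le]; nlinarith
        nlinarith [hdnn n, mul_nonneg (norm_nonneg (x n - T (x n))) (Real.sqrt_nonneg c)]
      calc dist (x n) (x (n+1)) = ‖x n - T (x n)‖ := by rw [hxsucc n, dist_eq_norm]
        _ ≤ d n / Real.sqrt c := h2
        _ ≤ (d 0 * α ^ n) / Real.sqrt c :=
          (div_le_div_iff_of_pos_right (Real.sqrt_pos.mpr hcpos)).mpr (hdgeo n)
        _ = C * α ^ n := by rw [hC]; ring
    -- Cauchy and limit
    have hcauchy : CauchySeq x := cauchySeq_of_le_geometric α C hα1 hdisp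
    obtain ⟨xbar, hxbar⟩ := cauchySeq_tendsto_of_complete hcauchy
    have hfixbar : T xbar = xbar := by
      have hcont : Continuous T := by
        have : LipschitzWith 1 T := by
          apply LipschitzWith.of_dist_le_mul
          intro a b; rw [dist_eq_norm, dist_eq_norm]; simpa using hTne a b
        exact this.continuous
      have h1 : Tendsto (fun n => T (x n)) atTop (nhds (T xbar)) :=
        (hcont.tendsto xbar).comp hxbar
      have h2 : Tendsto (fun n => x (n+1)) atTop (nhds xbar) :=
        hxbar.comp (tendsto_add_atTop_nat 1)
      have h3 : (fun n => x (n+1)) = fun n => T (x n) := funext hxsucc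
      rw [h3] at h2
      exact tendsto_nhds_unique h1 h2
    refine ⟨xbar, hfixbar, hxbar, C / (1 - α), div_nonneg hCnn (by linarith), α,
      ⟨hαnn, hα1⟩, ?_⟩
    intro n
    have := dist_le_of_le_geometric_of_tendsto α C hα1 hdisp hxbar n
    rw [dist_eq_norm] at this
    calc ‖x n - xbar‖ ≤ C * α ^ n / (1 - α) := this
      _ = C / (1 - α) * α ^ n := by ring
end

section
/- Let A, B be nonempty closed convex subsets of a Euclidean space X with ri A ∩ ri B ≠ ∅, let c ∈ A ∩ B, and set T = P_B R_A + Id - P_A (the Douglas–Rachford operator, R_A = 2P_A - Id). Then there exist δ > 0 and θ < 1 such that for all x ∈ aff(A ∪ B) with ‖x - c‖ ≤ δ: ⟨P_A x - R_A x, P_B R_A x - R_A x⟩ ≤ θ·d_A(x)·d_B(R_A x), and consequently ‖x - Tx‖² ≥ ((1-θ)/5)·max{d_A(x)², d_B(x)²}. -/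
open Metric Filter

section Aux

variable {X : Type*} [NormedAddCommGroup X] [InnerProductSpace ℝ X]

/-- Variational characterization of the metric projection onto a convex set. -/
lemma proj_ineq' {A : Set X} (hconv : Convex ℝ A) {x p : X} (hp : p ∈ A)
    (hn : ‖x - p‖ = infDist x A) : ∀ a ∈ A, (inner ℝ (x - p) (a - p) : ℝ) ≤ 0 := by
  have h : ‖x - p‖ = ⨅ w : A, ‖x - ↑w‖ := by
    rw [hn, infDist_eq_iInf]
    simp [dist_eq_norm]
  exact (norm_eq_iInf_iff_real_inner_le_zero hconv hp).mp h

/-- A point of the intrinsic interior has a relative neighborhood inside the set. -/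
lemma intrinsic_nbhd {A : Set X} {z : X} (hz : z ∈ intrinsicInterior ℝ A) :
    ∃ ε > (0:ℝ), ∀ y ∈ (affineSpan ℝ A : Set X), dist y z < ε → y ∈ A := by
  obtain ⟨z', hz', rfl⟩ := hz
  rw [mem_interior_iff_mem_nhds, nhds_subtype_eq_comap, Filter.mem_comap] at hz'
  obtain ⟨t, ht, hts⟩ := hz'
  obtain ⟨ε, hε, hball⟩ := Metric.mem_nhds_iff.mp ht
  refine ⟨ε, hε, fun y hy hdy => ?_⟩
  exact hts (hball (show (⟨y, hy⟩ : affineSpan ℝ A).1 ∈ ball (z' : X) ε from hdy))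

/-- If a linear functional is nonpositive on a convex set and vanishes at a point of the
intrinsic interior, then it vanishes on the whole set. -/
lemma ri_flat {A : Set X} {u c z : X} (hz : z ∈ intrinsicInterior ℝ A)
    (h : ∀ a ∈ A, (inner ℝ u (a - c) : ℝ) ≤ 0) (hz0 : (inner ℝ u (z - c) : ℝ) = 0) :
    ∀ a ∈ A, (inner ℝ u (a - c) : ℝ) = 0 := by
  obtain ⟨ε, hε, hball⟩ := intrinsic_nbhd hz
  intro a ha
  refine le_antisymm (h a ha) ?_
  set t : ℝ := ε / (2 * (‖z - a‖ + 1)) with ht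
  have hN : (0:ℝ) < ‖z - a‖ + 1 := by positivity
  have htpos : 0 < t := by positivity
  have hzA : z ∈ A := intrinsicInterior_subset hz
  have hy : z + t • (z - a) ∈ A := by
    apply hball
    · have h1 : z + t • (z - a) = AffineMap.lineMap a z (1 + t) := by
        simp only [AffineMap.lineMap_apply_module]
        module
      rw [h1]
      exact AffineMap.lineMap_mem _ (subset_affineSpan ℝ A ha) (subset_affineSpan ℝ A hzA)
    · rw [dist_eq_norm]
      have h2 : z + t • (z - a) - z = t • (z - a) := by module
      rw [h2, norm_smul, Real.norm_eq_abs, abs_of_pos htpos]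
      have h3 : t * (‖z - a‖ + 1) = ε / 2 := by
        rw [ht]; field_simp
      nlinarith [mul_le_mul_of_nonneg_left (le_of_lt (lt_add_one ‖z - a‖)) (le_of_lt htpos)]
  have hle := h _ hy
  have hcalc : (inner ℝ u (z + t • (z - a) - c) : ℝ)
      = inner ℝ u (z - c) + t * ((inner ℝ u (z - c) : ℝ) - inner ℝ u (a - c)) := by
    have h4 : z + t • (z - a) - c = (z - c) + t • ((z - c) - (a - c)) := by module
    rw [h4]
    simp only [inner_add_right, inner_sub_right, real_inner_smul_right]
    try ring
  rw [hcalc, hz0] at hle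
  nlinarith

/-- Transversality: a vector normal to `A` and antinormal to `B` at a common point,
lying in the direction of the affine span of `A ∪ B`, is zero. -/
lemma trans_normal {A B : Set X}
    (htrans : (intrinsicInterior ℝ A ∩ intrinsicInterior ℝ B).Nonempty)
    {c u : X}
    (hu1 : ∀ a ∈ A, (inner ℝ u (a - c) : ℝ) ≤ 0)
    (hu2 : ∀ b ∈ B, (0:ℝ) ≤ inner ℝ u (b - c))
    (huV : u ∈ (affineSpan ℝ (A ∪ B)).direction) : u = 0 := by
  obtain ⟨z, hzA, hzB⟩ := htrans
  have hz0 : (inner ℝ u (z - c) : ℝ) = 0 :=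
    le_antisymm (hu1 z (intrinsicInterior_subset hzA)) (hu2 z (intrinsicInterior_subset hzB))
  have hA0 := ri_flat hzA hu1 hz0
  have hB0 : ∀ b ∈ B, (inner ℝ u (b - c) : ℝ) = 0 := by
    have hz0' : (inner ℝ (-u) (z - c) : ℝ) = 0 := by rw [inner_neg_left, hz0, neg_zero]
    have h2' : ∀ b ∈ B, (inner ℝ (-u) (b - c) : ℝ) ≤ 0 := by
      intro b hb
      rw [inner_neg_left]
      linarith [hu2 b hb]
    intro b hb
    have := ri_flat hzB h2' hz0' b hb
    rw [inner_neg_left] at this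
    linarith
  have hset : ∀ p ∈ A ∪ B, (inner ℝ u (p - c) : ℝ) = 0 := fun p hp => hp.elim (hA0 p) (hB0 p)
  have hmem : u ∈ (Submodule.span ℝ {u})ᗮ := by
    have h1 : (affineSpan ℝ (A ∪ B)).direction ≤ (Submodule.span ℝ {u})ᗮ := by
      rw [direction_affineSpan, vectorSpan_def]
      apply Submodule.span_le.mpr
      rintro v ⟨p, hp, q, hq, rfl⟩
      rw [SetLike.mem_coe, Submodule.mem_orthogonal_singleton_iff_inner_right]
      show (inner ℝ u (p -ᵥ q) : ℝ) = 0
      have h5 : p -ᵥ q = (p - c) - (q - c) := by rw [vsub_eq_sub]; abel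
      rw [h5, inner_sub_right, hset p hp, hset q hq, sub_zero]
    exact h1 huV
  have := Submodule.mem_orthogonal_singleton_iff_inner_right.mp hmem
  exact inner_self_eq_zero.mp this

end Aux

section Key

variable {X : Type*} [NormedAddCommGroup X] [InnerProductSpace ℝ X] [FiniteDimensional ℝ X]

/-- The key uniform angle bound near a common point of two transversal convex sets. -/
lemma dr_key (A B : Set X) (hAconv : Convex ℝ A) (hBconv : Convex ℝ B)
    (htrans : (intrinsicInterior ℝ A ∩ intrinsicInterior ℝ B).Nonempty)
    (c : X) (hc : c ∈ A ∩ B)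
    (PA PB : X → X)
    (hPA : ∀ x, PA x ∈ A ∧ ‖x - PA x‖ = infDist x A)
    (hPB : ∀ x, PB x ∈ B ∧ ‖x - PB x‖ = infDist x B)
    (RA : X → X) (hRA : ∀ x, RA x = (2:ℝ) • PA x - x) :
    ∃ θ : ℝ, 0 ≤ θ ∧ θ < 1 ∧ ∃ δ > (0:ℝ),
      ∀ x ∈ (affineSpan ℝ (A ∪ B) : Set X), ‖x - c‖ ≤ δ →
        (inner ℝ (x - PA x) (PB (RA x) - RA x) : ℝ) ≤ θ * infDist x A * infDist (RA x) B := by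
  by_contra hcon
  push_neg at hcon
  have hseq : ∀ n : ℕ, ∃ x, x ∈ (affineSpan ℝ (A ∪ B) : Set X) ∧ ‖x - c‖ ≤ 1/(n+1) ∧
      (1 - 1/(n+1)) * infDist x A * infDist (RA x) B <
        (inner ℝ (x - PA x) (PB (RA x) - RA x) : ℝ) := by
    intro n
    have h1 : (0:ℝ) ≤ 1 - 1/(n+1) := by
      have : (1:ℝ)/(n+1) ≤ 1 := by
        rw [div_le_one (by positivity)]
        linarith [Nat.cast_nonneg (α := ℝ) n]
      linarith
    have h2 : (1:ℝ) - 1/(n+1) < 1 := by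
      have : (0:ℝ) < 1/(n+1) := by positivity
      linarith
    obtain ⟨x, hx1, hx2, hx3⟩ := hcon (1 - 1/(n+1)) h1 h2 (1/(n+1)) (by positivity)
    exact ⟨x, hx1, hx2, hx3⟩
  choose x hx1 hx2 hx3 using hseq
  -- positivity of the distances
  have hdA : ∀ n, 0 < infDist (x n) A := by
    intro n
    rcases (infDist_nonneg (s := A) (x := x n)).lt_or_eq with h | h
    · exact h
    · exfalso
      have h0 : x n - PA (x n) = 0 := norm_eq_zero.mp (by rw [(hPA (x n)).2, ← h])
      have := hx3 n
      rw [h0, inner_zero_left, ← h] at this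
      simp at this
  have hdB : ∀ n, 0 < infDist (RA (x n)) B := by
    intro n
    rcases (infDist_nonneg (s := B) (x := RA (x n))).lt_or_eq with h | h
    · exact h
    · exfalso
      have h0 : RA (x n) - PB (RA (x n)) = 0 :=
        norm_eq_zero.mp (by rw [(hPB (RA (x n))).2, ← h])
      have h0' : PB (RA (x n)) - RA (x n) = 0 := by
        rw [← neg_sub, h0, neg_zero]
      have := hx3 n
      rw [h0', inner_zero_right, ← h] at this
      simp at this
  set u : ℕ → X := fun n => (infDist (x n) A)⁻¹ • (x n - PA (x n)) with hu
  set w : ℕ → X := fun n => (infDist (RA (x n)) B)⁻¹ • (PB (RA (x n)) - RA (x n)) with hw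
  have hun : ∀ n, ‖u n‖ = 1 := by
    intro n
    rw [hu]
    simp only [norm_smul, norm_inv, Real.norm_eq_abs, abs_of_pos (hdA n), (hPA (x n)).2]
    exact inv_mul_cancel₀ (ne_of_gt (hdA n))
  have hwn : ∀ n, ‖w n‖ = 1 := by
    intro n
    rw [hw]
    simp only [norm_smul, norm_inv, Real.norm_eq_abs, abs_of_pos (hdB n)]
    rw [norm_sub_rev, (hPB (RA (x n))).2]
    exact inv_mul_cancel₀ (ne_of_gt (hdB n))
  have hinner : ∀ n : ℕ, 1 - 1/((n:ℝ)+1) ≤ (inner ℝ (u n) (w n) : ℝ) := by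
    intro n
    have hA := hdA n
    have hB := hdB n
    have hkey : (inner ℝ (u n) (w n) : ℝ) = (infDist (x n) A)⁻¹ *
        ((infDist (RA (x n)) B)⁻¹ * (inner ℝ (x n - PA (x n)) (PB (RA (x n)) - RA (x n)) : ℝ)) := by
      rw [hu, hw]
      simp only [real_inner_smul_left, real_inner_smul_right]
      ring
    have h1 := le_of_lt (hx3 n)
    have h2 := mul_le_mul_of_nonneg_left h1 (le_of_lt (inv_pos.mpr hB))
    have h3 := mul_le_mul_of_nonneg_left h2 (le_of_lt (inv_pos.mpr hA))
    have h4 : (infDist (x n) A)⁻¹ * ((infDist (RA (x n)) B)⁻¹ *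
        ((1 - 1/((n:ℝ)+1)) * infDist (x n) A * infDist (RA (x n)) B)) = 1 - 1/((n:ℝ)+1) := by
      field_simp
    rw [hkey]
    calc 1 - 1/((n:ℝ)+1) = _ := h4.symm
      _ ≤ _ := h3
  -- compactness
  have hK : IsCompact ((sphere (0:X) 1) ×ˢ (sphere (0:X) 1)) :=
    (isCompact_sphere _ _).prod (isCompact_sphere _ _)
  have hmemK : ∀ n, (u n, w n) ∈ (sphere (0:X) 1) ×ˢ (sphere (0:X) 1) := fun n =>
    ⟨mem_sphere_zero_iff_norm.mpr (hun n), mem_sphere_zero_iff_norm.mpr (hwn n)⟩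
  obtain ⟨⟨u₀, w₀⟩, hUW, φ, hφ, hlim⟩ := hK.tendsto_subseq hmemK
  have hu₀ : ‖u₀‖ = 1 := mem_sphere_zero_iff_norm.mp hUW.1
  have hw₀ : ‖w₀‖ = 1 := mem_sphere_zero_iff_norm.mp hUW.2
  have hul : Tendsto (fun n => u (φ n)) atTop (nhds u₀) :=
    (Continuous.tendsto continuous_fst _).comp hlim
  have hwl : Tendsto (fun n => w (φ n)) atTop (nhds w₀) :=
    (Continuous.tendsto continuous_snd _).comp hlim
  -- convergence of the points
  have hb : ∀ n : ℕ, (1:ℝ)/(φ n + 1) ≤ 1/((n:ℝ)+1) := by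
    intro n
    apply one_div_le_one_div_of_le (by positivity)
    have h7 : (n:ℝ) ≤ φ n := Nat.cast_le.mpr hφ.le_apply
    linarith
  have htz : Tendsto (fun n : ℕ => (1:ℝ)/(n+1)) atTop (nhds 0) :=
    tendsto_one_div_add_atTop_nhds_zero_nat
  have hd0 : Tendsto (fun n => dist (x (φ n)) c) atTop (nhds 0) := by
    refine squeeze_zero (fun n => dist_nonneg) (fun n => ?_) htz
    rw [dist_eq_norm]
    exact le_trans (hx2 (φ n)) (hb n)
  have hxc : Tendsto (fun n => x (φ n)) atTop (nhds c) :=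
    tendsto_iff_dist_tendsto_zero.mpr hd0
  have hPA2 : ∀ y, dist (PA y) c ≤ 2 * dist y c := by
    intro y
    have h1 : dist (PA y) y ≤ dist y c := by
      rw [dist_comm, dist_eq_norm, (hPA y).2]
      exact infDist_le_dist_of_mem hc.1
    calc dist (PA y) c ≤ dist (PA y) y + dist y c := dist_triangle _ _ _
      _ ≤ 2 * dist y c := by linarith
  have hPB2 : ∀ y, dist (PB y) c ≤ 2 * dist y c := by
    intro y
    have h1 : dist (PB y) y ≤ dist y c := by
      rw [dist_comm, dist_eq_norm, (hPB y).2]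
      exact infDist_le_dist_of_mem hc.2
    calc dist (PB y) c ≤ dist (PB y) y + dist y c := dist_triangle _ _ _
      _ ≤ 2 * dist y c := by linarith
  have hPAc : Tendsto (fun n => PA (x (φ n))) atTop (nhds c) := by
    apply tendsto_iff_dist_tendsto_zero.mpr
    apply squeeze_zero (fun n => dist_nonneg) (fun n => hPA2 _)
    simpa using hd0.const_mul 2
  have hRAc : Tendsto (fun n => RA (x (φ n))) atTop (nhds c) := by
    have h2c : (2:ℝ) • c - c = c := by module
    have h := (hPAc.const_smul (2:ℝ)).sub hxc
    rw [h2c] at h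
    exact h.congr fun n => (hRA _).symm
  have hrd0 : Tendsto (fun n => dist (RA (x (φ n))) c) atTop (nhds 0) :=
    tendsto_iff_dist_tendsto_zero.mp hRAc
  have hPBc : Tendsto (fun n => PB (RA (x (φ n)))) atTop (nhds c) := by
    apply tendsto_iff_dist_tendsto_zero.mpr
    apply squeeze_zero (fun n => dist_nonneg) (fun n => hPB2 _)
    simpa using hrd0.const_mul 2
  -- inner ℝ product goes to at least 1, hence u₀ = w₀
  have h1le : (1:ℝ) ≤ inner ℝ u₀ w₀ := by
    have hcont : Tendsto (fun n => (inner ℝ (u (φ n)) (w (φ n)) : ℝ)) atTop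
        (nhds (inner ℝ u₀ w₀)) := hul.inner hwl
    have hf : Tendsto (fun n : ℕ => 1 - (1:ℝ)/(n+1)) atTop (nhds 1) := by
      have hc1 : Tendsto (fun _ : ℕ => (1:ℝ)) atTop (nhds 1) := tendsto_const_nhds
      simpa using hc1.sub htz
    refine le_of_tendsto_of_tendsto' hf hcont fun n => ?_
    calc 1 - (1:ℝ)/(n+1) ≤ 1 - 1/(φ n + 1) := by linarith [hb n]
      _ ≤ _ := by
          have := hinner (φ n)
          push_cast at this ⊢
          linarith
  have hu₀w₀ : u₀ = w₀ := by
    have hsq : ‖u₀ - w₀‖^2 = ‖u₀‖^2 - 2 * inner ℝ u₀ w₀ + ‖w₀‖^2 := by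
      rw [norm_sub_sq_real]
    rw [hu₀, hw₀] at hsq
    have h0 : ‖u₀ - w₀‖ = 0 := by nlinarith [norm_nonneg (u₀ - w₀)]
    exact sub_eq_zero.mp (norm_eq_zero.mp h0)
  -- normal cone inequalities in the limit
  have hnormA : ∀ a ∈ A, (inner ℝ u₀ (a - c) : ℝ) ≤ 0 := by
    intro a ha
    have hcont : Tendsto (fun n => (inner ℝ (u (φ n)) (a - PA (x (φ n))) : ℝ)) atTop
        (nhds (inner ℝ u₀ (a - c))) := hul.inner (tendsto_const_nhds.sub hPAc)
    refine le_of_tendsto hcont (Eventually.of_forall fun n => ?_)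
    have hineq := proj_ineq' hAconv (hPA (x (φ n))).1 (hPA (x (φ n))).2 a ha
    have := mul_le_mul_of_nonneg_left hineq
      (inv_nonneg.mpr (infDist_nonneg : (0:ℝ) ≤ infDist (x (φ n)) A))
    rw [hu]
    simp only [real_inner_smul_left]
    linarith
  have hnormB : ∀ b ∈ B, (0:ℝ) ≤ inner ℝ u₀ (b - c) := by
    intro b hb
    rw [hu₀w₀]
    have hcont : Tendsto (fun n => (inner ℝ (w (φ n)) (b - PB (RA (x (φ n)))) : ℝ)) atTop
        (nhds (inner ℝ w₀ (b - c))) := hwl.inner (tendsto_const_nhds.sub hPBc)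
    refine ge_of_tendsto hcont (Eventually.of_forall fun n => ?_)
    have hineq := proj_ineq' hBconv (hPB (RA (x (φ n)))).1 (hPB (RA (x (φ n)))).2 b hb
    have h5 : (inner ℝ (PB (RA (x (φ n))) - RA (x (φ n))) (b - PB (RA (x (φ n)))) : ℝ)
        = -(inner ℝ (RA (x (φ n)) - PB (RA (x (φ n)))) (b - PB (RA (x (φ n)))) : ℝ) := by
      rw [← inner_neg_left, neg_sub]
    have := mul_le_mul_of_nonneg_left hineq
      (inv_nonneg.mpr (infDist_nonneg : (0:ℝ) ≤ infDist (RA (x (φ n))) B))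
    rw [hw]
    simp only [real_inner_smul_left]
    rw [h5]
    nlinarith [inv_nonneg.mpr (infDist_nonneg : (0:ℝ) ≤ infDist (RA (x (φ n))) B)]
  -- u₀ lies in the direction of the affine span
  have hdirn : ∀ n, u n ∈ (affineSpan ℝ (A ∪ B)).direction := by
    intro n
    apply Submodule.smul_mem
    have h1 : x n ∈ affineSpan ℝ (A ∪ B) := hx1 n
    have h2 : PA (x n) ∈ affineSpan ℝ (A ∪ B) :=
      subset_affineSpan ℝ _ (Or.inl (hPA (x n)).1)
    exact AffineSubspace.vsub_mem_direction h1 h2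
  have hdir : u₀ ∈ (affineSpan ℝ (A ∪ B)).direction := by
    have hcl : IsClosed ((affineSpan ℝ (A ∪ B)).direction : Set X) :=
      Submodule.closed_of_finiteDimensional _
    exact hcl.mem_of_tendsto hul (Eventually.of_forall fun n => hdirn (φ n))
  have := trans_normal htrans hnormA hnormB hdir
  rw [this, norm_zero] at hu₀
  exact one_ne_zero hu₀.symm

end Key

/-- Local angle estimate for the Douglas–Rachford operator of two transversal sets. -/
theorem dr_local_angle_estimate
    {X : Type*} [NormedAddCommGroup X] [InnerProductSpace ℝ X] [FiniteDimensional ℝ X]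
    (A B : Set X) (hAne : A.Nonempty) (hBne : B.Nonempty)
    (hAc : IsClosed A) (hBc : IsClosed B) (hAconv : Convex ℝ A) (hBconv : Convex ℝ B)
    (htrans : (intrinsicInterior ℝ A ∩ intrinsicInterior ℝ B).Nonempty)
    (c : X) (hc : c ∈ A ∩ B)
    (PA PB : X → X)
    (hPA : ∀ x, PA x ∈ A ∧ ‖x - PA x‖ = infDist x A)
    (hPB : ∀ x, PB x ∈ B ∧ ‖x - PB x‖ = infDist x B)
    (RA : X → X) (hRA : ∀ x, RA x = (2:ℝ) • PA x - x)
    (T : X → X) (hT : ∀ x, T x = PB (RA x) + x - PA x) :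
    ∃ δ > (0:ℝ), ∃ θ < (1:ℝ),
      ∀ x ∈ (affineSpan ℝ (A ∪ B) : Set X), ‖x - c‖ ≤ δ →
        (inner ℝ (PA x - RA x) (PB (RA x) - RA x) : ℝ) ≤
          θ * infDist x A * infDist (RA x) B ∧
        ‖x - T x‖ ^ 2 ≥ (1 - θ) / 5 * max (infDist x A ^ 2) (infDist x B ^ 2) := by
  obtain ⟨θ, hθ0, hθ1, δ, hδ, hkey⟩ := dr_key A B hAconv hBconv htrans c hc PA PB hPA hPB RA hRA
  refine ⟨δ, hδ, θ, hθ1, fun x hx hxd => ?_⟩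
  have h1 := hkey x hx hxd
  have hPAR : PA x - RA x = x - PA x := by rw [hRA]; module
  constructor
  · rw [hPAR]; exact h1
  · set a := infDist x A with hadef
    set b := infDist (RA x) B with hbdef
    set d := infDist x B with hddef
    have hna : ‖x - PA x‖ = a := (hPA x).2
    have hnb : ‖PB (RA x) - RA x‖ = b := by rw [norm_sub_rev]; exact (hPB (RA x)).2
    have hxT : x - T x = (x - PA x) - (PB (RA x) - RA x) := by rw [hT x, hRA x]; module
    have hsq : ‖x - T x‖^2 =
        a^2 + b^2 - 2 * (inner ℝ (x - PA x) (PB (RA x) - RA x) : ℝ) := by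
      rw [hxT, norm_sub_sq_real, hna, hnb]; ring
    have h2a : dist x (RA x) = 2*a := by
      rw [dist_eq_norm, hRA]
      have h6 : x - ((2:ℝ) • PA x - x) = (2:ℝ) • (x - PA x) := by module
      rw [h6, norm_smul, hna]
      simp
    have hd : d ≤ b + 2*a := by
      calc d ≤ infDist (RA x) B + dist x (RA x) := infDist_le_infDist_add_dist
        _ = b + 2*a := by rw [h2a, ← hbdef]
    have ha0 : 0 ≤ a := infDist_nonneg
    have hb0 : 0 ≤ b := infDist_nonneg
    have hd0 : 0 ≤ d := infDist_nonneg
    have hd2 : d^2 ≤ (b + 2*a)^2 := by nlinarith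
    rw [ge_iff_le, hsq]
    rcases le_total (a^2) (d^2) with hmax | hmax
    · rw [max_eq_right hmax]
      nlinarith [mul_nonneg hθ0 (sq_nonneg (a-b)), sq_nonneg (a - 2*b),
        mul_nonneg (by linarith : (0:ℝ) ≤ 1 - θ) (sq_nonneg (a - 2*b))]
    · rw [max_eq_left hmax]
      nlinarith [mul_nonneg hθ0 (sq_nonneg (a-b)), sq_nonneg (a-b)]
end

section
/- Let A, B be nonempty closed convex subsets of a finite-dimensional real Hilbert space X with ri A ∩ ri B ≠ ∅, and let T = P_B R_A + Id - P_A be the Douglas–Rachford operator. Then T is boundedly linearly regular: for every ρ > 0 there exists κ > 0 such that ‖x - Tx‖ ≥ κ·d_{Fix T}(x) for all x with ‖x‖ ≤ ρ. -/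
open Metric

set_option linter.unusedSectionVars false
set_option maxHeartbeats 400000
noncomputable section
variable {X : Type*} [NormedAddCommGroup X] [InnerProductSpace ℝ X]
local notation "⟪" x ", " y "⟫" => @inner ℝ _ _ x y

lemma le_infDist' {α : Type*} [PseudoMetricSpace α] {s : Set α} (hs : s.Nonempty) {x : α} {a : ℝ}
    (h : ∀ y ∈ s, a ≤ dist x y) : a ≤ infDist x s := by
  by_contra hlt
  push_neg at hlt
  obtain ⟨y, hy, hdy⟩ := (infDist_lt_iff hs).1 hlt
  exact absurd (h y hy) (not_le.2 hdy)

lemma proj_vi {A : Set X} (hconv : Convex ℝ A) {x y : X} (hy : y ∈ A)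
    (h : ‖x - y‖ = infDist x A) : ∀ a ∈ A, ⟪x - y, a - y⟫ ≤ 0 := by
  have h2 : ‖x - y‖ = ⨅ w : A, ‖x - (w : X)‖ := by
    rw [h, infDist_eq_iInf]
    congr 1; ext w; rw [dist_eq_norm]
  exact (norm_eq_iInf_iff_real_inner_le_zero hconv hy).1 h2

lemma proj_unique {A : Set X} (hconv : Convex ℝ A) {x y₁ y₂ : X} (hy₁ : y₁ ∈ A) (hy₂ : y₂ ∈ A)
    (h₁ : ‖x - y₁‖ = infDist x A) (h₂ : ‖x - y₂‖ = infDist x A) : y₁ = y₂ := by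
  have v1 := proj_vi hconv hy₁ h₁ y₂ hy₂
  have v2 := proj_vi hconv hy₂ h₂ y₁ hy₁
  have : ⟪y₂ - y₁, y₂ - y₁⟫ ≤ 0 := by
    have : ⟪(x - y₁) - (x - y₂), y₂ - y₁⟫ ≤ 0 := by
      rw [inner_sub_left]
      have := neg_nonneg.2 v2
      rw [← inner_neg_right] at this
      simp only [neg_sub] at this
      linarith [v1]
    simpa using this
  have h0 : y₂ - y₁ = 0 := by
    have := real_inner_self_nonneg (x := y₂ - y₁)
    have heq : ⟪y₂ - y₁, y₂ - y₁⟫ = 0 := le_antisymm ‹_› this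
    exact inner_self_eq_zero.1 heq
  exact (sub_eq_zero.1 h0).symm
lemma ball_of_intrinsic {A : Set X} {e : X} (he : e ∈ intrinsicInterior ℝ A) :
    ∃ ε > 0, ∀ z : X, z ∈ Submodule.span ℝ ((fun a => a - e) '' A) → ‖z‖ ≤ ε → e + z ∈ A := by
  obtain ⟨y, hy, hye⟩ := mem_intrinsicInterior.1 he
  rw [mem_interior_iff_mem_nhds, Metric.mem_nhds_iff] at hy
  obtain ⟨ε, hε, hball⟩ := hy
  have heA : e ∈ A := intrinsicInterior_subset he
  refine ⟨ε/2, by linarith, fun z hz hzn => ?_⟩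
  have hdir : z ∈ (affineSpan ℝ A).direction := by
    rw [direction_affineSpan]
    refine Submodule.span_le.2 ?_ hz
    rintro _ ⟨a, ha, rfl⟩
    have := vsub_mem_vectorSpan ℝ ha heA
    simpa [vsub_eq_sub] using this
  have hmem : e + z ∈ affineSpan ℝ A := by
    have := AffineSubspace.vadd_mem_of_mem_direction hdir (mem_affineSpan ℝ heA)
    simpa [vadd_eq_add, add_comm] using this
  have hball2 : (⟨e + z, hmem⟩ : affineSpan ℝ A) ∈ Metric.ball y ε := by
    rw [mem_ball, Subtype.dist_eq, hye]
    simp only [dist_eq_norm, add_sub_cancel_left]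
    linarith
  exact hball hball2

lemma infDist_add_left {s : Set X} (z₀ : X) (hz : ∀ u, u ∈ s ↔ z₀ + u ∈ s) (w : X) :
    infDist (z₀ + w) s = infDist w s := by
  rcases s.eq_empty_or_nonempty with rfl | hs
  · simp
  apply le_antisymm
  · apply le_infDist' hs _
    intro u hu
    calc infDist (z₀ + w) s ≤ dist (z₀ + w) (z₀ + u) := infDist_le_dist_of_mem ((hz u).1 hu)
    _ = dist w u := by simp [dist_eq_norm, add_sub_add_left_eq_sub]
  · apply le_infDist' hs _
    intro u hu
    have hu' : u - z₀ ∈ s := by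
      rw [hz (u - z₀)]; simpa using hu
    calc infDist w s ≤ dist w (u - z₀) := infDist_le_dist_of_mem hu'
    _ = dist (z₀ + w) u := by
      simp only [dist_eq_norm]
      congr 1
      abel

lemma infDist_smul_le (U : Submodule ℝ X) {t : ℝ} (ht : 0 < t) (w : X) :
    infDist (t • w) (U : Set X) ≤ t * infDist w (U : Set X) := by
  have hne : (U : Set X).Nonempty := ⟨0, U.zero_mem⟩
  refine le_of_forall_pos_le_add fun δ hδ => ?_
  have : infDist w (U : Set X) < infDist w (U : Set X) + δ / t := by
    have : 0 < δ / t := by positivity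
    linarith
  obtain ⟨u, hu, hdu⟩ := (infDist_lt_iff hne).1 this
  calc infDist (t • w) (U : Set X) ≤ dist (t • w) (t • u) :=
        infDist_le_dist_of_mem (U.smul_mem t hu)
    _ = t * dist w u := by
        simp only [dist_eq_norm, ← smul_sub, norm_smul, Real.norm_eq_abs, abs_of_pos ht]
    _ ≤ t * (infDist w (U : Set X) + δ / t) := by nlinarith [dist_nonneg (x := w) (y := u)]
    _ = t * infDist w (U : Set X) + δ := by field_simp

lemma infDist_smul_eq (U : Submodule ℝ X) {t : ℝ} (ht : 0 < t) (w : X) :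
    infDist (t • w) (U : Set X) = t * infDist w (U : Set X) := by
  refine le_antisymm (infDist_smul_le U ht w) ?_
  have h2 := infDist_smul_le U (inv_pos.2 ht) (t • w)
  rw [inv_smul_smul₀ (ne_of_gt ht)] at h2
  calc t * infDist w (U : Set X) ≤ t * (t⁻¹ * infDist (t • w) (U : Set X)) := by
        nlinarith
    _ = infDist (t • w) (U : Set X) := by field_simp

lemma infDist_orthProj [CompleteSpace X] (W : Submodule ℝ X) [Submodule.HasOrthogonalProjection W] (z : X) :
    infDist z (W : Set X) = ‖z - (Submodule.orthogonalProjectionOnto W z : X)‖ := by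
  rw [infDist_eq_iInf, ← Submodule.starProjection_apply, Submodule.starProjection_minimal]
  congr 1; ext w; rw [dist_eq_norm]

lemma two_subspace_reg [FiniteDimensional ℝ X] (U V : Submodule ℝ X) :
    ∃ c > 0, ∀ z : X, infDist z ((U ⊓ V : Submodule ℝ X) : Set X) ≤
      c * (infDist z (U : Set X) + infDist z (V : Set X)) := by
  set W := (U ⊓ V)ᗮ with hW
  set K := sphere (0 : X) 1 ∩ (W : Set X) with hK
  have hKc : IsCompact K := (isCompact_sphere 0 1).inter_right (Submodule.closed_of_finiteDimensional W)
  have hUne : (U : Set X).Nonempty := ⟨0, U.zero_mem⟩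
  have hVne : (V : Set X).Nonempty := ⟨0, V.zero_mem⟩
  rcases K.eq_empty_or_nonempty with hKe | hKne
  · -- W = ⊥, so U ⊓ V = ⊤
    have hWbot : W = ⊥ := by
      rw [Submodule.eq_bot_iff]
      intro w hw
      by_contra hw0
      have h1 : ‖w‖⁻¹ • w ∈ K := by
        constructor
        · simp [norm_smul, norm_ne_zero_iff.2 hw0]
        · exact W.smul_mem _ hw
      rw [hKe] at h1; exact h1
    have htop : U ⊓ V = ⊤ := by
      have := Submodule.orthogonal_eq_bot_iff (K := U ⊓ V)
      exact this.1 hWbot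
    refine ⟨1, one_pos, fun z => ?_⟩
    have : z ∈ ((U ⊓ V : Submodule ℝ X) : Set X) := by rw [htop]; trivial
    rw [infDist_zero_of_mem this]
    have := infDist_nonneg (x := z) (s := (U : Set X))
    have := infDist_nonneg (x := z) (s := (V : Set X))
    linarith
  · have hcont : ContinuousOn (fun z : X => infDist z (U : Set X) + infDist z (V : Set X)) K :=
      ((continuous_infDist_pt _).add (continuous_infDist_pt _)).continuousOn
    obtain ⟨x₀, hx₀K, hx₀min⟩ := hKc.exists_isMinOn hKne hcont
    set m := infDist x₀ (U : Set X) + infDist x₀ (V : Set X) with hm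
    have hmpos : 0 < m := by
      have hnnU := infDist_nonneg (x := x₀) (s := (U : Set X))
      have hnnV := infDist_nonneg (x := x₀) (s := (V : Set X))
      rcases lt_or_eq_of_le (by linarith :
        (0:ℝ) ≤ infDist x₀ (U : Set X) + infDist x₀ (V : Set X)) with h | h
      · exact h
      · exfalso
        have hU0 : infDist x₀ (U : Set X) = 0 := by
          have := infDist_nonneg (x := x₀) (s := (U : Set X))
          have := infDist_nonneg (x := x₀) (s := (V : Set X))
          linarith
        have hV0 : infDist x₀ (V : Set X) = 0 := by
          have := infDist_nonneg (x := x₀) (s := (U : Set X))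
          have := infDist_nonneg (x := x₀) (s := (V : Set X))
          linarith
        have hxU : x₀ ∈ U := by
          have := (IsClosed.mem_iff_infDist_zero (Submodule.closed_of_finiteDimensional U) hUne).2 hU0
          exact this
        have hxV : x₀ ∈ V :=
          (IsClosed.mem_iff_infDist_zero (Submodule.closed_of_finiteDimensional V) hVne).2 hV0
        have hxW : x₀ ∈ W := hx₀K.2
        have : x₀ = 0 := by
          have h0 : @inner ℝ _ _ x₀ x₀ = 0 :=
            (Submodule.mem_orthogonal _ x₀).1 hxW x₀ (Submodule.mem_inf.2 ⟨hxU, hxV⟩)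
          exact inner_self_eq_zero.1 h0
        have : ‖x₀‖ = 1 := by simpa using hx₀K.1
        rw [‹x₀ = 0›] at this; simp at this
    refine ⟨m⁻¹, inv_pos.2 hmpos, fun z => ?_⟩
    set z₀ := ((Submodule.orthogonalProjectionOnto (U ⊓ V) z : X)) with hz₀
    set w := z - z₀ with hwdef
    have hz₀mem : z₀ ∈ U ⊓ V := Submodule.coe_mem _
    have hwW : w ∈ W := Submodule.sub_starProjection_mem_orthogonal z
    have hle : infDist z ((U ⊓ V : Submodule ℝ X) : Set X) ≤ ‖w‖ := by
      have := infDist_le_dist_of_mem (x := z) hz₀mem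
      simpa [dist_eq_norm] using this
    rcases eq_or_ne w 0 with hw0 | hw0
    · have h0 : infDist z ((U ⊓ V : Submodule ℝ X) : Set X) ≤ 0 := by rw [hw0] at hle; simpa using hle
      have := infDist_nonneg (x := z) (s := (U : Set X))
      have := infDist_nonneg (x := z) (s := (V : Set X))
      have hmi : 0 < m⁻¹ := inv_pos.2 hmpos
      nlinarith
    · set wh := ‖w‖⁻¹ • w with hwh
      have hwn : 0 < ‖w‖ := norm_pos_iff.2 hw0
      have hwhK : wh ∈ K := ⟨by simp [hwh, norm_smul, ne_of_gt hwn], W.smul_mem _ hwW⟩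
      have hmin : m ≤ infDist wh (U : Set X) + infDist wh (V : Set X) := hx₀min hwhK
      -- infDist z U = infDist w U  (translation by z₀ ∈ U)
      have htransU : infDist z (U : Set X) = infDist w (U : Set X) := by
        have : z = z₀ + w := by rw [hwdef]; abel
        rw [this]
        exact infDist_add_left z₀ (fun u => ⟨fun hu => U.add_mem (hz₀mem.1) hu,
          fun hu => by simpa using U.sub_mem hu (hz₀mem.1)⟩) w
      have htransV : infDist z (V : Set X) = infDist w (V : Set X) := by
        have : z = z₀ + w := by rw [hwdef]; abel
        rw [this]
        exact infDist_add_left z₀ (fun u => ⟨fun hu => V.add_mem (hz₀mem.2) hu,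
          fun hu => by simpa using V.sub_mem hu (hz₀mem.2)⟩) w
      have hscale : infDist w (U : Set X) + infDist w (V : Set X)
          = ‖w‖ * (infDist wh (U : Set X) + infDist wh (V : Set X)) := by
        have hU := infDist_smul_eq U hwn wh
        have hV := infDist_smul_eq V hwn wh
        rw [hwh, smul_inv_smul₀ (ne_of_gt hwn)] at hU hV
        rw [hU, hV]; ring
      have : m * ‖w‖ ≤ infDist z (U : Set X) + infDist z (V : Set X) := by
        rw [htransU, htransV, hscale]
        nlinarith
      calc infDist z ((U ⊓ V : Submodule ℝ X) : Set X) ≤ ‖w‖ := hle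
        _ ≤ m⁻¹ * (infDist z (U : Set X) + infDist z (V : Set X)) := by
            rw [← mul_le_mul_iff_right₀ hmpos]
            calc m * ‖w‖ ≤ infDist z (U : Set X) + infDist z (V : Set X) := this
              _ = m * (m⁻¹ * (infDist z (U : Set X) + infDist z (V : Set X))) := by
                  field_simp

lemma ortho_key {A B : Set X} {e : X} {εA εB : ℝ} (hεA : 0 < εA) (hεB : 0 < εB)
    (hballA : ∀ z : X, z ∈ Submodule.span ℝ ((fun a => a - e) '' A) → ‖z‖ ≤ εA → e + z ∈ A)
    (hballB : ∀ z : X, z ∈ Submodule.span ℝ ((fun a => a - e) '' B) → ‖z‖ ≤ εB → e + z ∈ B)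
    (heA : e ∈ A) (heB : e ∈ B) {w p : X}
    (hw1 : ∀ a ∈ A, ⟪w, a - p⟫ ≤ 0) (hw2 : ∀ b ∈ B, (0:ℝ) ≤ ⟪w, b - p⟫) :
    w ∈ (Submodule.span ℝ ((fun z => z - e) '' (A ∪ B)))ᗮ := by
  have he0 : ⟪w, e - p⟫ = (0:ℝ) := le_antisymm (hw1 e heA) (hw2 e heB)
  have hsplit : ∀ q : X, ⟪w, q - e⟫ = ⟪w, q - p⟫ - ⟪w, e - p⟫ := by
    intro q
    rw [← inner_sub_right]
    congr 1
    abel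
  have claimA : ∀ a ∈ A, ⟪w, a - e⟫ = (0:ℝ) := by
    intro a ha
    have hle : ⟪w, a - e⟫ ≤ 0 := by rw [hsplit, he0]; simpa using hw1 a ha
    rcases eq_or_ne a e with rfl | hae
    · simp
    · have hne : (0:ℝ) < ‖e - a‖ := by
        rw [norm_pos_iff, sub_ne_zero]; exact fun h => hae h.symm
      set t : ℝ := εA / ‖e - a‖ with hts
      have ht : 0 < t := div_pos hεA hne
      set z := t • (e - a) with hz
      have hzmem : z ∈ Submodule.span ℝ ((fun a => a - e) '' A) := by
        have hae' : a - e ∈ Submodule.span ℝ ((fun a => a - e) '' A) :=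
          Submodule.subset_span ⟨a, ha, rfl⟩
        have : e - a = -(a - e) := by abel
        rw [hz, this]
        exact Submodule.smul_mem _ _ (Submodule.neg_mem _ hae')
      have hznorm : ‖z‖ ≤ εA := by
        rw [hz, norm_smul, Real.norm_eq_abs, abs_of_pos ht, hts]
        rw [div_mul_cancel₀ _ (ne_of_gt hne)]
      have hmem := hballA z hzmem hznorm
      have h1 : ⟪w, (e + z) - p⟫ ≤ 0 := hw1 _ hmem
      have h2 : ⟪w, (e + z) - p⟫ = ⟪w, z⟫ + ⟪w, e - p⟫ := by
        rw [← inner_add_right]; congr 1; abel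
      have hz0 : ⟪w, z⟫ ≤ 0 := by rw [h2, he0] at h1; linarith
      have : t * ⟪w, e - a⟫ ≤ 0 := by rwa [hz, real_inner_smul_right] at hz0
      have hea : ⟪w, e - a⟫ ≤ 0 := by nlinarith
      have : ⟪w, e - a⟫ = -⟪w, a - e⟫ := by
        rw [← inner_neg_right]; congr 1; abel
      linarith [hle, this ▸ hea]
  have claimB : ∀ b ∈ B, ⟪w, b - e⟫ = (0:ℝ) := by
    intro b hb
    have hge : (0:ℝ) ≤ ⟪w, b - e⟫ := by rw [hsplit, he0]; simpa using hw2 b hb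
    rcases eq_or_ne b e with rfl | hbe
    · simp
    · have hne : (0:ℝ) < ‖e - b‖ := by
        rw [norm_pos_iff, sub_ne_zero]; exact fun h => hbe h.symm
      set t : ℝ := εB / ‖e - b‖ with hts
      have ht : 0 < t := div_pos hεB hne
      set z := t • (e - b) with hz
      have hzmem : z ∈ Submodule.span ℝ ((fun a => a - e) '' B) := by
        have hbe' : b - e ∈ Submodule.span ℝ ((fun a => a - e) '' B) :=
          Submodule.subset_span ⟨b, hb, rfl⟩
        have : e - b = -(b - e) := by abel
        rw [hz, this]
        exact Submodule.smul_mem _ _ (Submodule.neg_mem _ hbe')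
      have hznorm : ‖z‖ ≤ εB := by
        rw [hz, norm_smul, Real.norm_eq_abs, abs_of_pos ht, hts]
        rw [div_mul_cancel₀ _ (ne_of_gt hne)]
      have hmem := hballB z hzmem hznorm
      have h1 : (0:ℝ) ≤ ⟪w, (e + z) - p⟫ := hw2 _ hmem
      have h2 : ⟪w, (e + z) - p⟫ = ⟪w, z⟫ + ⟪w, e - p⟫ := by
        rw [← inner_add_right]; congr 1; abel
      have hz0 : (0:ℝ) ≤ ⟪w, z⟫ := by rw [h2, he0] at h1; linarith
      have : (0:ℝ) ≤ t * ⟪w, e - b⟫ := by rwa [hz, real_inner_smul_right] at hz0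
      have heb : (0:ℝ) ≤ ⟪w, e - b⟫ := by nlinarith
      have hswap : ⟪w, e - b⟫ = -⟪w, b - e⟫ := by
        rw [← inner_neg_right]; congr 1; abel
      linarith [hge, hswap ▸ heb]
  rw [Submodule.mem_orthogonal]
  intro u hu
  have hsub : ((fun z => z - e) '' (A ∪ B)) ⊆ ((Submodule.span ℝ {w})ᗮ : Set X) := by
    rintro _ ⟨zz, hzz, rfl⟩
    rw [SetLike.mem_coe, Submodule.mem_orthogonal_singleton_iff_inner_right]
    rcases hzz with h | h
    · exact claimA zz h
    · exact claimB zz h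
  have hle : Submodule.span ℝ ((fun z => z - e) '' (A ∪ B)) ≤ (Submodule.span ℝ {w})ᗮ :=
    Submodule.span_le.2 hsub
  have := hle hu
  rw [Submodule.mem_orthogonal_singleton_iff_inner_right] at this
  rw [real_inner_comm]
  exact this

lemma proj_of_mem {A : Set X} {PA : X → X} (hPA : ∀ x, PA x ∈ A ∧ ‖x - PA x‖ = infDist x A)
    {c : X} (hc : c ∈ A) : PA c = c := by
  have h := (hPA c).2
  rw [infDist_zero_of_mem hc] at h
  have : c - PA c = 0 := norm_eq_zero.1 h
  have := sub_eq_zero.1 this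
  exact this.symm

lemma proj_translate {A : Set X} (hconv : Convex ℝ A) {PA : X → X}
    (hPA : ∀ x, PA x ∈ A ∧ ‖x - PA x‖ = infDist x A)
    {Y : Submodule ℝ X} {e : X} (hsub : ∀ a ∈ A, a - e ∈ Y) {v : X} (hv : v ∈ Yᗮ) (x : X) :
    PA (x + v) = PA x := by
  have hAne : A.Nonempty := ⟨PA x, (hPA x).1⟩
  have hkey : ∀ a ∈ A, ‖x + v - a‖ ^ 2 = ‖x - a‖ ^ 2 + (2 * ⟪x - e, v⟫ + ‖v‖ ^ 2) := by
    intro a ha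
    have hav : ⟪x - a, v⟫ = ⟪x - e, v⟫ - ⟪a - e, v⟫ := by
      rw [← inner_sub_left]; congr 1; abel
    have hae : ⟪a - e, v⟫ = (0:ℝ) := (Submodule.mem_orthogonal Y v).1 hv _ (hsub a ha)
    have : x + v - a = (x - a) + v := by abel
    rw [this, norm_add_sq_real, hav, hae]
    ring
  -- PA x is a nearest point to x + v
  have hd : ∀ a ∈ A, ‖x + v - PA x‖ ≤ ‖x + v - a‖ := by
    intro a ha
    have h1 : ‖x - PA x‖ ≤ ‖x - a‖ := by
      rw [(hPA x).2]
      have := infDist_le_dist_of_mem (x := x) ha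
      rwa [dist_eq_norm] at this
    have hsq : ‖x + v - PA x‖ ^ 2 ≤ ‖x + v - a‖ ^ 2 := by
      rw [hkey a ha, hkey (PA x) (hPA x).1]
      nlinarith [norm_nonneg (x - PA x), norm_nonneg (x - a)]
    nlinarith [norm_nonneg (x + v - PA x), norm_nonneg (x + v - a)]
  have hval : ‖(x + v) - PA x‖ = infDist (x + v) A := by
    apply le_antisymm
    · apply le_infDist' hAne
      intro a ha
      rw [dist_eq_norm]
      exact hd a ha
    · have := infDist_le_dist_of_mem (x := x + v) (hPA x).1
      rwa [dist_eq_norm] at this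
  exact proj_unique hconv (hPA (x + v)).1 (hPA x).1 (hPA (x + v)).2 hval

lemma blr_pair [FiniteDimensional ℝ X] {A B : Set X}
    (hAc : IsClosed A) (hBc : IsClosed B) (hAconv : Convex ℝ A) (hBconv : Convex ℝ B)
    {PA PB : X → X}
    (hPA : ∀ x, PA x ∈ A ∧ ‖x - PA x‖ = infDist x A)
    (hPB : ∀ x, PB x ∈ B ∧ ‖x - PB x‖ = infDist x B)
    {e : X} {εA εB : ℝ} (hεA : 0 < εA) (hεB : 0 < εB)
    (hballA : ∀ z : X, z ∈ Submodule.span ℝ ((fun a => a - e) '' A) → ‖z‖ ≤ εA → e + z ∈ A)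
    (hballB : ∀ z : X, z ∈ Submodule.span ℝ ((fun a => a - e) '' B) → ‖z‖ ≤ εB → e + z ∈ B)
    (heA : e ∈ A) (heB : e ∈ B) {R : ℝ} (hR : 0 ≤ R) :
    ∃ C > 0, ∀ x ∈ A, ‖x‖ ≤ R → infDist x (A ∩ B) ≤ C * infDist x B := by
  set U := Submodule.span ℝ ((fun a => a - e) '' A) with hU
  set V := Submodule.span ℝ ((fun a => a - e) '' B) with hV
  obtain ⟨c, hc, hreg⟩ := two_subspace_reg U V
  set ε := min εA εB with hε
  have hεpos : 0 < ε := lt_min hεA hεB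
  set R₂ := c * (R + ‖e‖) + R + ‖e‖ with hR₂
  have hR₂pos : 0 ≤ R₂ := by positivity
  set C := c + (R₂ / ε) * (1 + c) with hC
  have hCpos : 0 < C := by positivity
  refine ⟨C, hCpos, fun x hx hxR => ?_⟩
  set dB := infDist x B with hdB
  have hdBnn : 0 ≤ dB := infDist_nonneg
  have hdBR : dB ≤ R + ‖e‖ := by
    calc dB ≤ dist x e := infDist_le_dist_of_mem heB
      _ = ‖x - e‖ := dist_eq_norm x e
      _ ≤ ‖x‖ + ‖e‖ := norm_sub_le x e
      _ ≤ R + ‖e‖ := by linarith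
  set y := e + ((Submodule.orthogonalProjectionOnto (U ⊓ V) (x - e) : X)) with hy
  have hye : y - e ∈ U ⊓ V := by
    have h : y - e = ((Submodule.orthogonalProjectionOnto (U ⊓ V) (x - e) : X)) := by rw [hy]; abel
    rw [h]
    exact Submodule.coe_mem (Submodule.orthogonalProjectionOnto (U ⊓ V) (x - e))
  have hxy : ‖x - y‖ ≤ c * dB := by
    have h1 : ‖x - y‖ = infDist (x - e) ((U ⊓ V : Submodule ℝ X) : Set X) := by
      rw [infDist_orthProj, hy]
      congr 1
      abel
    have hxU : infDist (x - e) (U : Set X) = 0 :=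
      infDist_zero_of_mem (Submodule.subset_span ⟨x, hx, rfl⟩)
    have hxV : infDist (x - e) (V : Set X) ≤ dB := by
      have hb : (PB x) - e ∈ V := Submodule.subset_span ⟨PB x, (hPB x).1, rfl⟩
      calc infDist (x - e) (V : Set X) ≤ dist (x - e) (PB x - e) := infDist_le_dist_of_mem hb
        _ = ‖x - PB x‖ := by rw [dist_eq_norm]; congr 1; abel
        _ = dB := (hPB x).2
    calc ‖x - y‖ = infDist (x - e) ((U ⊓ V : Submodule ℝ X) : Set X) := h1
      _ ≤ c * (infDist (x - e) (U : Set X) + infDist (x - e) (V : Set X)) := hreg _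
      _ ≤ c * dB := by rw [hxU]; nlinarith
  set a' := PA y with ha'
  set vA := y - a' with hvA
  set b' := PB y with hb'
  set vB := y - b' with hvB
  have hdAy : ‖vA‖ ≤ c * dB := by
    rw [hvA, (hPA y).2]
    calc infDist y A ≤ dist y x := infDist_le_dist_of_mem hx
      _ = ‖x - y‖ := by rw [dist_comm, dist_eq_norm]
      _ ≤ c * dB := hxy
  have hdBy : ‖vB‖ ≤ (1 + c) * dB := by
    rw [hvB, (hPB y).2]
    calc infDist y B ≤ infDist x B + dist y x := infDist_le_infDist_add_dist
      _ = dB + ‖x - y‖ := by rw [dist_comm, dist_eq_norm]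
      _ ≤ dB + c * dB := by linarith
      _ = (1 + c) * dB := by ring
  set d := max ‖vA‖ ‖vB‖ with hd
  have hdnn : 0 ≤ d := le_trans (norm_nonneg _) (le_max_left _ _)
  have hddB : d ≤ (1 + c) * dB := by
    apply max_le
    · nlinarith
    · exact hdBy
  have hyenorm : ‖y - e‖ ≤ R₂ := by
    calc ‖y - e‖ = ‖(y - x) + (x - e)‖ := by congr 1; abel
      _ ≤ ‖y - x‖ + ‖x - e‖ := norm_add_le _ _
      _ ≤ c * dB + (‖x‖ + ‖e‖) := by
          have : ‖y - x‖ = ‖x - y‖ := by rw [norm_sub_rev]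
          have h2 := norm_sub_le x e
          linarith [hxy, this ▸ hxy]
      _ ≤ c * (R + ‖e‖) + (R + ‖e‖) := by nlinarith
      _ = R₂ := by rw [hR₂]; ring
  rcases eq_or_lt_of_le hdnn with hd0 | hdpos
  · -- d = 0 : y ∈ A ∩ B
    have hvA0 : ‖vA‖ = 0 := le_antisymm ((le_max_left _ _).trans hd0.symm.le) (norm_nonneg _)
    have hvB0 : ‖vB‖ = 0 := le_antisymm ((le_max_right _ _).trans hd0.symm.le) (norm_nonneg _)
    have hyA : y ∈ A := by
      have : infDist y A = 0 := by rw [← (hPA y).2, ← hvA]; exact hvA0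
      exact (hAc.mem_iff_infDist_zero ⟨e, heA⟩).2 this
    have hyB : y ∈ B := by
      have : infDist y B = 0 := by rw [← (hPB y).2, ← hvB]; exact hvB0
      exact (hBc.mem_iff_infDist_zero ⟨e, heB⟩).2 this
    calc infDist x (A ∩ B) ≤ dist x y := infDist_le_dist_of_mem ⟨hyA, hyB⟩
      _ = ‖x - y‖ := dist_eq_norm x y
      _ ≤ c * dB := hxy
      _ ≤ C * dB := by
          have hcc : c ≤ C := by
            have h0 : 0 ≤ R₂ / ε * (1 + c) := by positivity
            rw [hC]; linarith
          nlinarith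
  · -- d > 0
    set lam := d / (d + ε) with hlam
    have hdεpos : 0 < d + ε := by linarith
    have hlam0 : 0 < lam := div_pos hdpos hdεpos
    have hlam1 : lam < 1 := by
      rw [hlam, div_lt_one hdεpos]; linarith
    have h1lam : 1 - lam = ε / (d + ε) := by
      rw [hlam]; field_simp; ring
    set z := lam • e + (1 - lam) • y with hz
    have hεA' : ε ≤ εA := min_le_left _ _
    have hεB' : ε ≤ εB := min_le_right _ _
    have hzA : z ∈ A := by
      have hvAU : vA ∈ U := by
        have h1 : y - e ∈ U := hye.1
        have h2 : a' - e ∈ U := Submodule.subset_span ⟨a', (hPA y).1, rfl⟩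
        have : vA = (y - e) - (a' - e) := by rw [hvA]; abel
        rw [this]; exact U.sub_mem h1 h2
      have haA : e + (ε / d) • vA ∈ A := by
        apply hballA _ (U.smul_mem _ hvAU)
        rw [norm_smul, Real.norm_eq_abs, abs_of_pos (div_pos hεpos hdpos)]
        have hvAd : ‖vA‖ ≤ d := le_max_left _ _
        calc ε / d * ‖vA‖ ≤ ε / d * d := by
              apply mul_le_mul_of_nonneg_left hvAd (le_of_lt (div_pos hεpos hdpos))
          _ = ε := by field_simp
          _ ≤ εA := hεA'
      have hcomb := hAconv haA (hPA y).1 (le_of_lt hlam0) (by linarith : (0:ℝ) ≤ 1 - lam)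
        (by ring : lam + (1 - lam) = 1)
      have heq : lam • (e + (ε / d) • vA) + (1 - lam) • a' = z := by
        have hcoef : lam * (ε / d) = 1 - lam := by
          rw [hlam, h1lam]; field_simp
        rw [hz, smul_add, smul_smul, hcoef, hvA, smul_sub]
        abel
      rwa [heq] at hcomb
    have hzB : z ∈ B := by
      have hvBV : vB ∈ V := by
        have h1 : y - e ∈ V := hye.2
        have h2 : b' - e ∈ V := Submodule.subset_span ⟨b', (hPB y).1, rfl⟩
        have : vB = (y - e) - (b' - e) := by rw [hvB]; abel
        rw [this]; exact V.sub_mem h1 h2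
      have haB : e + (ε / d) • vB ∈ B := by
        apply hballB _ (V.smul_mem _ hvBV)
        rw [norm_smul, Real.norm_eq_abs, abs_of_pos (div_pos hεpos hdpos)]
        have hvBd : ‖vB‖ ≤ d := le_max_right _ _
        calc ε / d * ‖vB‖ ≤ ε / d * d := by
              apply mul_le_mul_of_nonneg_left hvBd (le_of_lt (div_pos hεpos hdpos))
          _ = ε := by field_simp
          _ ≤ εB := hεB'
      have hcomb := hBconv haB (hPB y).1 (le_of_lt hlam0) (by linarith : (0:ℝ) ≤ 1 - lam)
        (by ring : lam + (1 - lam) = 1)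
      have heq : lam • (e + (ε / d) • vB) + (1 - lam) • b' = z := by
        have hcoef : lam * (ε / d) = 1 - lam := by
          rw [hlam, h1lam]; field_simp
        rw [hz, smul_add, smul_smul, hcoef, hvB, smul_sub]
        abel
      rwa [heq] at hcomb
    have hyz : ‖y - z‖ ≤ (d / ε) * ‖y - e‖ := by
      have : y - z = lam • (y - e) := by
        rw [hz, smul_sub]
        have : y = lam • y + (1 - lam) • y := by
          rw [← add_smul]; simp
        nth_rewrite 1 [this]
        abel
      rw [this, norm_smul, Real.norm_eq_abs, abs_of_pos hlam0]
      apply mul_le_mul_of_nonneg_right _ (norm_nonneg _)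
      rw [hlam, div_le_div_iff₀ hdεpos hεpos]
      nlinarith
    have hyz2 : ‖y - z‖ ≤ (d / ε) * R₂ := by
      refine hyz.trans ?_
      have h2 : 0 ≤ d / ε := by positivity
      exact mul_le_mul_of_nonneg_left hyenorm h2
    have hyz3 : ‖y - z‖ ≤ (R₂ / ε) * ((1 + c) * dB) := by
      refine hyz2.trans ?_
      have : (d / ε) * R₂ = (R₂ / ε) * d := by ring
      rw [this]
      have h3 : 0 ≤ R₂ / ε := by positivity
      exact mul_le_mul_of_nonneg_left hddB h3
    calc infDist x (A ∩ B) ≤ dist x z := infDist_le_dist_of_mem ⟨hzA, hzB⟩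
      _ = ‖x - z‖ := dist_eq_norm x z
      _ ≤ ‖x - y‖ + ‖y - z‖ := by
          have h : x - z = (x - y) + (y - z) := by abel
          rw [h]; exact norm_add_le _ _
      _ ≤ c * dB + (R₂ / ε) * ((1 + c) * dB) := by linarith
      _ = C * dB := by rw [hC]; ring


open Filter in
lemma key_w_bound [FiniteDimensional ℝ X] {A B : Set X}
    (hAc : IsClosed A) (hBc : IsClosed B) (hAconv : Convex ℝ A) (hBconv : Convex ℝ B)
    {PA PB : X → X}
    (hPA : ∀ x, PA x ∈ A ∧ ‖x - PA x‖ = infDist x A)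
    (hPB : ∀ x, PB x ∈ B ∧ ‖x - PB x‖ = infDist x B)
    {e : X} {εA εB : ℝ} (hεA : 0 < εA) (hεB : 0 < εB)
    (hballA : ∀ z : X, z ∈ Submodule.span ℝ ((fun a => a - e) '' A) → ‖z‖ ≤ εA → e + z ∈ A)
    (hballB : ∀ z : X, z ∈ Submodule.span ℝ ((fun a => a - e) '' B) → ‖z‖ ≤ εB → e + z ∈ B)
    (heA : e ∈ A) (heB : e ∈ B) (ρ' : ℝ) :
    ∃ c > 0, ∀ x : X, ‖x‖ ≤ ρ' →
      x - e ∈ Submodule.span ℝ ((fun z => z - e) '' (A ∪ B)) →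
      ‖x - PA x‖ ≤ c * ‖PA x - PB ((2:ℝ) • PA x - x)‖ := by
  set Y := Submodule.span ℝ ((fun z => z - e) '' (A ∪ B)) with hY
  by_contra hcon
  push_neg at hcon
  have hseq : ∀ n : ℕ, ∃ x : X, ‖x‖ ≤ ρ' ∧ x - e ∈ Y ∧
      ((n:ℝ) + 1) * ‖PA x - PB ((2:ℝ) • PA x - x)‖ < ‖x - PA x‖ := by
    intro n
    obtain ⟨x, hx1, hx2, hx3⟩ := hcon ((n:ℝ) + 1) (by positivity)
    exact ⟨x, hx1, hx2, hx3⟩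
  choose x hx1 hx2 hx3 using hseq
  set p := fun n => PA (x n) with hp
  set q := fun n => PB ((2:ℝ) • p n - x n) with hq
  set w := fun n => x n - p n with hw
  set g := fun n => p n - q n with hg
  have hgw : ∀ n : ℕ, ((n:ℝ) + 1) * ‖g n‖ < ‖w n‖ := fun n => hx3 n
  have hwpos : ∀ n, 0 < ‖w n‖ := by
    intro n
    calc (0:ℝ) ≤ ((n:ℝ) + 1) * ‖g n‖ := by positivity
      _ < ‖w n‖ := hgw n
  have hwb : ∀ n, ‖w n‖ ≤ ρ' + ‖e‖ := by
    intro n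
    have h1 : ‖w n‖ = infDist (x n) A := (hPA (x n)).2
    calc ‖w n‖ = infDist (x n) A := h1
      _ ≤ dist (x n) e := infDist_le_dist_of_mem heA
      _ = ‖x n - e‖ := dist_eq_norm _ _
      _ ≤ ‖x n‖ + ‖e‖ := norm_sub_le _ _
      _ ≤ ρ' + ‖e‖ := by linarith [hx1 n]
  have hρe : 0 < ρ' + ‖e‖ := lt_of_lt_of_le (hwpos 0) (hwb 0)
  have hgb : ∀ n, ‖g n‖ ≤ (ρ' + ‖e‖) * (1 / ((n:ℝ) + 1)) := by
    intro n
    have hn : (0:ℝ) < (n:ℝ) + 1 := by positivity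
    rw [mul_one_div, le_div_iff₀ hn]
    nlinarith [hgw n, hwb n]
  have hg0 : Tendsto (fun n => ‖g n‖) atTop (nhds 0) := by
    have := tendsto_one_div_add_atTop_nhds_zero_nat.const_mul (ρ' + ‖e‖)
    rw [mul_zero] at this
    exact squeeze_zero (fun n => norm_nonneg _) hgb this
  set Rp := ρ' + (ρ' + ‖e‖) with hRp
  set Rq := Rp + (ρ' + ‖e‖) with hRq
  have hpb : ∀ n, p n ∈ closedBall (0:X) Rp := by
    intro n
    rw [mem_closedBall, dist_zero_right]
    have h : p n = x n - w n := by simp only [hw]; abel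
    rw [h]
    calc ‖x n - w n‖ ≤ ‖x n‖ + ‖w n‖ := norm_sub_le _ _
      _ ≤ Rp := by rw [hRp]; linarith [hx1 n, hwb n]
  have hqb : ∀ n, q n ∈ closedBall (0:X) Rq := by
    intro n
    rw [mem_closedBall, dist_zero_right]
    have h1 : q n = p n - g n := by simp only [hg]; abel
    have h2 : ‖g n‖ ≤ ρ' + ‖e‖ := by
      have h3 := hgw n
      have hn1 : (1:ℝ) ≤ (n:ℝ) + 1 := by
        have : (0:ℝ) ≤ (n:ℝ) := Nat.cast_nonneg n
        linarith
      nlinarith [hwb n, norm_nonneg (g n)]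
    rw [h1]
    calc ‖p n - g n‖ ≤ ‖p n‖ + ‖g n‖ := norm_sub_le _ _
      _ ≤ Rq := by
          have h4 := hpb n
          rw [mem_closedBall, dist_zero_right] at h4
          rw [hRq]; linarith
  set wh := fun n => (‖w n‖)⁻¹ • w n with hwh
  have hwhs : ∀ n, wh n ∈ sphere (0:X) 1 := by
    intro n
    rw [mem_sphere, dist_zero_right, hwh]
    simp only [norm_smul, Real.norm_eq_abs, abs_of_pos (inv_pos.2 (hwpos n))]
    field_simp [ne_of_gt (hwpos n)]
  obtain ⟨pbar, -, φ₁, hφ₁, hptend⟩ :=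
    tendsto_subseq_of_bounded isBounded_closedBall hpb
  obtain ⟨wbar, -, φ₂, hφ₂, hwtend⟩ :=
    tendsto_subseq_of_bounded isBounded_sphere (fun n => hwhs (φ₁ n))
  obtain ⟨qbar, -, φ₃, hφ₃, hqtend⟩ :=
    tendsto_subseq_of_bounded isBounded_closedBall (fun n => hqb (φ₁ (φ₂ n)))
  set ψ := fun n => φ₁ (φ₂ (φ₃ n)) with hψ
  have hψmono : StrictMono ψ := (hφ₁.comp hφ₂).comp hφ₃
  have hp' : Tendsto (fun n => p (ψ n)) atTop (nhds pbar) :=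
    hptend.comp ((hφ₂.comp hφ₃).tendsto_atTop)
  have hw' : Tendsto (fun n => wh (ψ n)) atTop (nhds wbar) :=
    hwtend.comp (hφ₃.tendsto_atTop)
  have hq' : Tendsto (fun n => q (ψ n)) atTop (nhds qbar) := hqtend
  have hg' : Tendsto (fun n => g (ψ n)) atTop (nhds 0) := by
    rw [tendsto_zero_iff_norm_tendsto_zero]
    exact hg0.comp (hψmono.tendsto_atTop)
  have hpA : pbar ∈ A := hAc.mem_of_tendsto hp' (Eventually.of_forall fun n => (hPA _).1)
  have hqB : qbar ∈ B := hBc.mem_of_tendsto hq' (Eventually.of_forall fun n => (hPB _).1)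
  have hpq : pbar = qbar := by
    have h1 : Tendsto (fun n => p (ψ n) - q (ψ n)) atTop (nhds (pbar - qbar)) := hp'.sub hq'
    have := tendsto_nhds_unique h1 hg'
    exact sub_eq_zero.1 this
  have hwnorm : ‖wbar‖ = 1 := by
    have h1 : Tendsto (fun n => ‖wh (ψ n)‖) atTop (nhds ‖wbar‖) :=
      (continuous_norm.tendsto _).comp hw'
    have h2 : (fun n => ‖wh (ψ n)‖) = fun _ => (1:ℝ) := by
      funext n
      have h3 := hwhs (ψ n)
      rwa [mem_sphere, dist_zero_right] at h3
    rw [h2] at h1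
    exact tendsto_nhds_unique h1 tendsto_const_nhds
  have hw1 : ∀ a ∈ A, ⟪wbar, a - pbar⟫ ≤ 0 := by
    intro a ha
    have hvi : ∀ n, ⟪wh n, a - p n⟫ ≤ 0 := by
      intro n
      have h0 := proj_vi hAconv (hPA (x n)).1 (hPA (x n)).2 a ha
      rw [hwh, real_inner_smul_left]
      exact mul_nonpos_of_nonneg_of_nonpos (le_of_lt (inv_pos.2 (hwpos n))) h0
    have htend : Tendsto (fun n => ⟪wh (ψ n), a - p (ψ n)⟫) atTop (nhds ⟪wbar, a - pbar⟫) :=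
      hw'.inner (tendsto_const_nhds.sub hp')
    exact le_of_tendsto htend (Eventually.of_forall fun n => hvi (ψ n))
  have hw2 : ∀ b ∈ B, (0:ℝ) ≤ ⟪wbar, b - pbar⟫ := by
    intro b hb
    have hvi : ∀ n, ⟪(‖w n‖)⁻¹ • g n - wh n, b - q n⟫ ≤ 0 := by
      intro n
      have h0 := proj_vi hBconv (hPB ((2:ℝ) • p n - x n)).1 (hPB ((2:ℝ) • p n - x n)).2 b hb
      have heqv : (2:ℝ) • p n - x n - q n = g n - w n := by
        rw [hg, hw]
        have h5 : ((2:ℝ) • p n : X) = p n + p n := two_smul ℝ (p n)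
        simp only
        rw [h5]
        abel
      rw [heqv] at h0
      have h6 : (‖w n‖)⁻¹ • g n - wh n = (‖w n‖)⁻¹ • (g n - w n) := by
        simp only [hwh]
        rw [← smul_sub]
      rw [h6, real_inner_smul_left]
      exact mul_nonpos_of_nonneg_of_nonpos (le_of_lt (inv_pos.2 (hwpos n))) h0
    have hvgtend : Tendsto (fun n => (‖w (ψ n)‖)⁻¹ • g (ψ n)) atTop (nhds 0) := by
      rw [tendsto_zero_iff_norm_tendsto_zero]
      have hb1 : ∀ n, ‖(‖w n‖)⁻¹ • g n‖ ≤ 1 / ((n:ℝ) + 1) := by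
        intro n
        rw [norm_smul, Real.norm_eq_abs, abs_of_pos (inv_pos.2 (hwpos n)), inv_mul_eq_div]
        have hn : (0:ℝ) < (n:ℝ) + 1 := by positivity
        rw [div_le_div_iff₀ (hwpos n) hn]
        nlinarith [hgw n]
      have hb1' : ∀ n, ‖(‖w (ψ n)‖)⁻¹ • g (ψ n)‖ ≤ 1 / ((n:ℝ) + 1) := by
        intro n
        refine (hb1 (ψ n)).trans ?_
        have hψn : (n:ℝ) ≤ (ψ n : ℝ) := by
          exact_mod_cast (hψmono.id_le n)
        apply div_le_div_of_nonneg_left one_pos.le (by positivity) ?_ |>.trans (le_refl _)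
        · linarith
      exact squeeze_zero (fun n => norm_nonneg _) hb1' tendsto_one_div_add_atTop_nhds_zero_nat
    have htend : Tendsto (fun n => ⟪(‖w (ψ n)‖)⁻¹ • g (ψ n) - wh (ψ n), b - q (ψ n)⟫)
        atTop (nhds ⟪(0:X) - wbar, b - qbar⟫) :=
      (hvgtend.sub hw').inner (tendsto_const_nhds.sub hq')
    have hle := le_of_tendsto htend (Eventually.of_forall fun n => hvi (ψ n))
    have h7 : ⟪(0:X) - wbar, b - qbar⟫ = -⟪wbar, b - pbar⟫ := by
      rw [zero_sub, inner_neg_left, hpq]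
    rw [h7] at hle
    linarith
  -- wbar ∈ Y
  have hwY : wbar ∈ Y := by
    have hcl : IsClosed (Y : Set X) := Y.closed_of_finiteDimensional
    apply hcl.mem_of_tendsto hw'
    apply Eventually.of_forall
    intro n
    have h1 : x (ψ n) - e ∈ Y := hx2 (ψ n)
    have h2 : p (ψ n) - e ∈ Y := Submodule.subset_span ⟨p (ψ n), Or.inl (hPA _).1, rfl⟩
    have h3 : w (ψ n) ∈ Y := by
      have : w (ψ n) = (x (ψ n) - e) - (p (ψ n) - e) := by simp only [hw]; abel
      rw [this]
      exact Y.sub_mem h1 h2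
    exact Y.smul_mem _ h3
  have horth : wbar ∈ Yᗮ := ortho_key hεA hεB hballA hballB heA heB hw1 hw2
  have : ⟪wbar, wbar⟫ = (0:ℝ) := (Submodule.mem_orthogonal Y wbar).1 horth wbar hwY
  have : wbar = 0 := inner_self_eq_zero.1 this
  rw [this] at hwnorm
  simp at hwnorm


end

set_option maxHeartbeats 1000000 in
/-- The Douglas–Rachford operator of two transversal convex sets is boundedly
linearly regular. -/
theorem dr_transversal_boundedly_linearly_regular
    {X : Type*} [NormedAddCommGroup X] [InnerProductSpace ℝ X] [FiniteDimensional ℝ X]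
    (A B : Set X) (hAne : A.Nonempty) (hBne : B.Nonempty)
    (hAc : IsClosed A) (hBc : IsClosed B) (hAconv : Convex ℝ A) (hBconv : Convex ℝ B)
    (htrans : (intrinsicInterior ℝ A ∩ intrinsicInterior ℝ B).Nonempty)
    (PA PB : X → X)
    (hPA : ∀ x, PA x ∈ A ∧ ‖x - PA x‖ = infDist x A)
    (hPB : ∀ x, PB x ∈ B ∧ ‖x - PB x‖ = infDist x B)
    (RA : X → X) (hRA : ∀ x, RA x = (2:ℝ) • PA x - x)
    (T : X → X) (hT : ∀ x, T x = PB (RA x) + x - PA x) :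
    ∀ ρ > (0:ℝ), ∃ κ > (0:ℝ), ∀ x : X, ‖x‖ ≤ ρ →
      ‖x - T x‖ ≥ κ * infDist x {y | T y = y} := by
  intro ρ hρ
  obtain ⟨e, heAi, heBi⟩ := htrans
  have heA : e ∈ A := intrinsicInterior_subset heAi
  have heB : e ∈ B := intrinsicInterior_subset heBi
  obtain ⟨εA, hεA, hballA⟩ := ball_of_intrinsic heAi
  obtain ⟨εB, hεB, hballB⟩ := ball_of_intrinsic heBi
  set Y := Submodule.span ℝ ((fun z => z - e) '' (A ∪ B)) with hY
  have hAsub : ∀ a ∈ A, a - e ∈ Y := fun a ha => Submodule.subset_span ⟨a, Or.inl ha, rfl⟩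
  have hBsub : ∀ b ∈ B, b - e ∈ Y := fun b hb => Submodule.subset_span ⟨b, Or.inr hb, rfl⟩
  set ρ' := ρ + 2 * ‖e‖ with hρ'def
  have hρ'0 : 0 < ρ' := by positivity
  set R := 2 * ρ' + ‖e‖ with hRdef
  have hR0 : 0 ≤ R := by positivity
  obtain ⟨C, hC, hblr⟩ := blr_pair hAc hBc hAconv hBconv hPA hPB hεA hεB hballA hballB
    heA heB hR0
  obtain ⟨c, hc, hkey⟩ := key_w_bound hAc hBc hAconv hBconv hPA hPB hεA hεB hballA hballB
    heA heB ρ'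
  refine ⟨(c + C + 1)⁻¹, by positivity, fun x hx => ?_⟩
  -- orthogonal decomposition of x along L = e + Y
  set u := e + ((Submodule.orthogonalProjectionOnto Y (x - e) : X)) with hu
  set v := x - u with hv
  have hvY : v ∈ Yᗮ := by
    have h : v = (x - e) - ((Submodule.orthogonalProjectionOnto Y (x - e) : X)) := by rw [hv, hu]; abel
    rw [h]
    exact Submodule.sub_starProjection_mem_orthogonal _
  have huY : u - e ∈ Y := by
    have h : u - e = ((Submodule.orthogonalProjectionOnto Y (x - e) : X)) := by rw [hu]; abel
    rw [h]
    exact Submodule.coe_mem _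
  have hun : ‖u‖ ≤ ρ' := by
    have h1 : ‖(Submodule.orthogonalProjectionOnto Y (x - e) : X)‖ ≤ ‖x - e‖ := by
      have := Submodule.orthogonalProjectionOnto_norm_le (K := Y)
      calc ‖(Submodule.orthogonalProjectionOnto Y (x - e) : X)‖ ≤ ‖Submodule.orthogonalProjectionOnto Y‖ * ‖x - e‖ :=
            (Submodule.orthogonalProjectionOnto Y).le_opNorm _
        _ ≤ 1 * ‖x - e‖ := by
            apply mul_le_mul_of_nonneg_right this (norm_nonneg _)
        _ = ‖x - e‖ := one_mul _
    calc ‖u‖ ≤ ‖e‖ + ‖(Submodule.orthogonalProjectionOnto Y (x - e) : X)‖ := norm_add_le _ _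
      _ ≤ ‖e‖ + ‖x - e‖ := by linarith
      _ ≤ ‖e‖ + (‖x‖ + ‖e‖) := by linarith [norm_sub_le x e]
      _ ≤ ρ' := by rw [hρ'def]; linarith
  have hxuv : x = u + v := by rw [hv]; abel
  -- invariance under the orthogonal part
  have hPAx : PA x = PA u := by
    rw [hxuv]; exact proj_translate hAconv hPA hAsub hvY u
  set p := PA u with hpdef
  set qq := PB ((2:ℝ) • p - u) with hqqdef
  have hPBx : PB (RA x) = qq := by
    have hRAx : RA x = ((2:ℝ) • p - u) + (-v) := by
      rw [hRA, hPAx, hxuv]; abel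
    rw [hRAx, hqqdef]
    exact proj_translate hBconv hPB hBsub (Submodule.neg_mem _ hvY) _
  have hxT : x - T x = p - qq := by
    rw [hT x, hPAx, hPBx]; abel
  -- distance bounds
  have hwb : ‖u - p‖ ≤ c * ‖p - qq‖ := hkey u hun huY
  have hpA : p ∈ A := (hPA u).1
  have hpR : ‖p‖ ≤ R := by
    have h1 : ‖u - p‖ = infDist u A := (hPA u).2
    have h2 : ‖u - p‖ ≤ ‖u - e‖ := by
      rw [h1]
      have := infDist_le_dist_of_mem (x := u) heA
      rwa [dist_eq_norm] at this
    have h3 : ‖u - e‖ ≤ ‖u‖ + ‖e‖ := norm_sub_le _ _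
    have h4 : ‖p‖ ≤ ‖u‖ + ‖u - p‖ := by
      calc ‖p‖ = ‖u - (u - p)‖ := by congr 1; abel
        _ ≤ ‖u‖ + ‖u - p‖ := norm_sub_le _ _
    rw [hRdef]
    linarith
  have hABp : infDist p (A ∩ B) ≤ C * infDist p B := hblr p hpA hpR
  have hdBp : infDist p B ≤ ‖p - qq‖ := by
    have := infDist_le_dist_of_mem (x := p) (hPB ((2:ℝ) • p - u)).1
    rwa [dist_eq_norm] at this
  have hchain : infDist u (A ∩ B) ≤ (c + C) * ‖p - qq‖ := by
    calc infDist u (A ∩ B) ≤ infDist p (A ∩ B) + dist u p := infDist_le_infDist_add_dist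
      _ ≤ C * infDist p B + ‖u - p‖ := by rw [dist_eq_norm]; linarith
      _ ≤ C * ‖p - qq‖ + c * ‖p - qq‖ := by nlinarith
      _ = (c + C) * ‖p - qq‖ := by ring
  -- fixed-point set
  have hfix : infDist x {y : X | T y = y} ≤ infDist u (A ∩ B) := by
    apply le_infDist' (⟨e, ⟨heA, heB⟩⟩ : (A ∩ B).Nonempty)
    intro cc hcc
    have hTcc : T (cc + v) = cc + v := by
      have h1 : PA (cc + v) = cc := by
        rw [proj_translate hAconv hPA hAsub hvY cc]
        exact proj_of_mem hPA hcc.1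
      have h2 : RA (cc + v) = cc + (-v) := by
        rw [hRA, h1]
        have : ((2:ℝ) • cc : X) = cc + cc := two_smul ℝ cc
        rw [this]; abel
      have h3 : PB (RA (cc + v)) = cc := by
        rw [h2, proj_translate hBconv hPB hBsub (Submodule.neg_mem _ hvY) cc]
        exact proj_of_mem hPB hcc.2
      rw [hT, h3, h1]
      abel
    have hmem : cc + v ∈ {y : X | T y = y} := hTcc
    calc infDist x {y : X | T y = y} ≤ dist x (cc + v) := infDist_le_dist_of_mem hmem
      _ = ‖u - cc‖ := by
          rw [dist_eq_norm, hxuv]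
          congr 1
          abel
      _ = dist u cc := (dist_eq_norm u cc).symm
  -- conclusion
  have hfinal : infDist x {y : X | T y = y} ≤ (c + C) * ‖x - T x‖ := by
    rw [hxT]
    exact hfix.trans hchain
  have hnn : 0 ≤ ‖x - T x‖ := norm_nonneg _
  have h1 : infDist x {y : X | T y = y} ≤ (c + C + 1) * ‖x - T x‖ := by nlinarith
  rw [ge_iff_le, inv_mul_le_iff₀ (by positivity : (0:ℝ) < c + C + 1)]
  exact h1
end

section
/- Set I = {1,…,m} and let (T_i)_{i∈I} be averaged nonexpansive self-maps of a real Hilbert space X with fixed point sets Z_i, each T_i boundedly regular, Z = ∩_i Z_i ≠ ∅, and (Z_i)_{i∈I} boundedly regular (for every bounded sequence (x_n), max_i d_{Z_i}(x_n) → 0 implies d_Z(x_n) → 0). Then for every x₀ ∈ X, the sequence ((T_m⋯T_2T_1)^n x₀) converges strongly to some point in Z. -/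
open Metric Filter

lemma norm_combo_sq {X : Type*} [NormedAddCommGroup X] [InnerProductSpace ℝ X]
    (t : ℝ) (a b : X) :
    ‖(1-t)•a + t•b‖^2 = (1-t)*‖a‖^2 + t*‖b‖^2 - t*(1-t)*‖a-b‖^2 := by
  simp only [← real_inner_self_eq_norm_sq]
  simp only [inner_add_left, inner_add_right, inner_smul_left, inner_smul_right,
    inner_sub_left, inner_sub_right, starRingEnd_apply, star_trivial]
  rw [real_inner_comm b a]
  ring

lemma op_key {X : Type*} [NormedAddCommGroup X] [InnerProductSpace ℝ X] (T : X → X)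
    (h : ∃ (lam : ℝ) (N : X → X), lam ∈ Set.Ico (0:ℝ) 1 ∧
      (∀ x y, ‖N x - N y‖ ≤ ‖x - y‖) ∧ ∀ x, T x = (1 - lam) • x + lam • N x) :
    ∃ κ : ℝ, 0 < κ ∧ (∀ x y, ‖T x - T y‖ ≤ ‖x - y‖) ∧
      ∀ x z, T z = z → ‖T x - z‖^2 + κ * ‖x - T x‖^2 ≤ ‖x - z‖^2 := by
  obtain ⟨lam, N, ⟨hl0, hl1⟩, hN, hT⟩ := h
  have hne : ∀ x y, ‖T x - T y‖ ≤ ‖x - y‖ := by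
    intro x y
    have he : T x - T y = (1-lam)•(x-y) + lam•(N x - N y) := by rw [hT, hT]; module
    calc ‖T x - T y‖ ≤ ‖(1-lam)•(x-y)‖ + ‖lam•(N x - N y)‖ := by rw [he]; exact norm_add_le _ _
      _ = (1-lam)*‖x-y‖ + lam*‖N x - N y‖ := by
          rw [norm_smul, norm_smul, Real.norm_of_nonneg (by linarith), Real.norm_of_nonneg hl0]
      _ ≤ (1-lam)*‖x-y‖ + lam*‖x-y‖ := by
          have := hN x y; nlinarith
      _ = ‖x-y‖ := by ring
  rcases eq_or_lt_of_le hl0 with h0 | hpos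
  · refine ⟨1, one_pos, hne, ?_⟩
    intro x z _
    have hid : T x = x := by rw [hT, ← h0]; simp
    rw [hid]; simp
  · refine ⟨(1-lam)/lam, div_pos (by linarith) hpos, hne, ?_⟩
    intro x z hz
    have hNz : N z = z := by
      have h1 : (1-lam)•z + lam•(N z) = z := by rw [← hT]; exact hz
      have h2 : lam•(N z) = lam•z := by
        have : lam•(N z) - lam•z = ((1-lam)•z + lam•(N z)) - z := by module
        rw [h1] at this; simpa [sub_eq_zero] using this
      exact smul_right_injective X hpos.ne' h2
    have hb : ‖N x - z‖ ≤ ‖x - z‖ := by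
      have := hN x z; rwa [hNz] at this
    have hid : ‖T x - z‖^2 = (1-lam)*‖x-z‖^2 + lam*‖N x - z‖^2 - lam*(1-lam)*‖x - N x‖^2 := by
      have he : T x - z = (1-lam)•(x-z) + lam•(N x - z) := by rw [hT]; module
      rw [he, norm_combo_sq]
      congr 3
      abel_nf
    have hxT : ‖x - T x‖ = lam * ‖x - N x‖ := by
      have he : x - T x = lam•(x - N x) := by rw [hT]; module
      rw [he, norm_smul, Real.norm_of_nonneg hl0]
    have hk : (1-lam)/lam * (lam*‖x - N x‖)^2 = lam*(1-lam)*‖x - N x‖^2 := by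
      field_simp
    rw [hid, hxT, hk]
    nlinarith [pow_le_pow_left₀ (norm_nonneg (N x - z)) hb 2, hpos.le]

def Pcomp {X : Type*} (m : ℕ) (T : Fin m → X → X) : ℕ → X → X
  | 0 => id
  | (j+1) => fun x => if h : j < m then T ⟨j,h⟩ (Pcomp m T j x) else Pcomp m T j x

lemma foldl_ofFn_eq {X : Type*} (m : ℕ) (T : Fin m → X → X) (x : X) :
    (List.ofFn T).foldl (fun a f => f a) x = Pcomp m T m x := by
  have key : ∀ j, j ≤ m → ((List.ofFn T).take j).foldl (fun a f => f a) x = Pcomp m T j x := by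
    intro j hj
    induction j with
    | zero => simp [Pcomp]
    | succ k ih =>
      have hk : k < m := hj
      rw [List.take_succ, List.foldl_append, ih (le_of_lt hk)]
      simp [Pcomp, hk, List.getElem?_ofFn]
  have := key m le_rfl
  rwa [List.take_of_length_le (by simp)] at this

/-- Strong convergence of the cyclic algorithm for averaged, boundedly regular
operators whose fixed point sets form a boundedly regular family. -/
theorem cyclic_algorithm_strong_convergence
    {X : Type*} [NormedAddCommGroup X] [InnerProductSpace ℝ X] [CompleteSpace X]
    (m : ℕ) (T : Fin m → X → X)
    (havg : ∀ i, ∃ (lam : ℝ) (N : X → X), lam ∈ Set.Ico (0:ℝ) 1 ∧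
      (∀ x y, ‖N x - N y‖ ≤ ‖x - y‖) ∧ ∀ x, T i x = (1 - lam) • x + lam • N x)
    (Z : Fin m → Set X) (hZ : ∀ i, Z i = {x | T i x = x})
    (hbrop : ∀ i, ∀ x : ℕ → X, Bornology.IsBounded (Set.range x) →
      Tendsto (fun n => x n - T i (x n)) atTop (nhds 0) →
      Tendsto (fun n => infDist (x n) (Z i)) atTop (nhds 0))
    (hZne : (⋂ i, Z i).Nonempty)
    (hbrfam : ∀ x : ℕ → X, Bornology.IsBounded (Set.range x) →
      (∀ i, Tendsto (fun n => infDist (x n) (Z i)) atTop (nhds 0)) →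
      Tendsto (fun n => infDist (x n) (⋂ i, Z i)) atTop (nhds 0)) :
    ∀ x₀ : X, ∃ z ∈ ⋂ i, Z i,
      Tendsto (fun n => (fun y => (List.ofFn T).foldl (fun a f => f a) y)^[n] x₀)
        atTop (nhds z) := by
  intro x₀
  choose κ hκpos hne hq using fun i => op_key (T i) (havg i)
  set S : X → X := fun y => (List.ofFn T).foldl (fun a f => f a) y with hSdef
  have hS : ∀ y, S y = Pcomp m T m y := fun y => foldl_ofFn_eq m T y
  set x : ℕ → X := fun n => S^[n] x₀ with hxdef
  have hxsucc : ∀ n, x (n+1) = Pcomp m T m (x n) := by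
    intro n
    show S^[n+1] x₀ = _
    rw [Function.iterate_succ_apply', hS]
  -- the fixed point z₀
  obtain ⟨z₀, hz₀⟩ := hZne
  have hfixAll : ∀ z, z ∈ ⋂ i, Z i → ∀ i, T i z = z := by
    intro z hzmem i
    have := Set.mem_iInter.mp hzmem i
    rwa [hZ i] at this
  have hz₀fix : ∀ i, T i z₀ = z₀ := hfixAll z₀ hz₀
  -- step nonincreasing for Pcomp
  have hPstep : ∀ z, (∀ i, T i z = z) → ∀ j y, ‖Pcomp m T j y - z‖ ≤ ‖y - z‖ := by
    intro z hzf j y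
    induction j with
    | zero => simp [Pcomp]
    | succ k ih =>
      by_cases h : k < m
      · simp only [Pcomp, dif_pos h]
        calc ‖T ⟨k,h⟩ (Pcomp m T k y) - z‖ = ‖T ⟨k,h⟩ (Pcomp m T k y) - T ⟨k,h⟩ z‖ := by
              rw [hzf ⟨k,h⟩]
          _ ≤ ‖Pcomp m T k y - z‖ := hne _ _ _
          _ ≤ ‖y - z‖ := ih
      · simpa only [Pcomp, dif_neg h] using ih
  -- monotone along j
  have hPmono : ∀ z, (∀ i, T i z = z) → ∀ y, Antitone (fun j => ‖Pcomp m T j y - z‖) := by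
    intro z hzf y
    apply antitone_nat_of_succ_le
    intro j
    by_cases h : j < m
    · simp only [Pcomp, dif_pos h]
      calc ‖T ⟨j,h⟩ (Pcomp m T j y) - z‖ = ‖T ⟨j,h⟩ (Pcomp m T j y) - T ⟨j,h⟩ z‖ := by
            rw [hzf ⟨j,h⟩]
        _ ≤ ‖Pcomp m T j y - z‖ := hne _ _ _
    · simp only [Pcomp, dif_neg h, le_refl]
  -- stage inequality
  have hstage : ∀ (i : Fin m) (y z : X), (∀ i', T i' z = z) →
      ‖Pcomp m T m y - z‖^2 + κ i * ‖Pcomp m T i y - T i (Pcomp m T i y)‖^2 ≤ ‖y - z‖^2 := by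
    intro i y z hzf
    have h1 : ‖Pcomp m T m y - z‖ ≤ ‖Pcomp m T (i+1) y - z‖ := hPmono z hzf y i.isLt
    have h1' : ‖Pcomp m T m y - z‖^2 ≤ ‖Pcomp m T (i+1) y - z‖^2 :=
      pow_le_pow_left₀ (norm_nonneg _) h1 2
    have h2 : Pcomp m T (i+1) y = T i (Pcomp m T i y) := by
      simp only [Pcomp, dif_pos i.isLt]
    have h3 : ‖T i (Pcomp m T i y) - z‖^2 + κ i * ‖Pcomp m T i y - T i (Pcomp m T i y)‖^2
        ≤ ‖Pcomp m T i y - z‖^2 := hq i _ z (hzf i)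
    have h4 : ‖Pcomp m T i y - z‖ ≤ ‖y - z‖ := hPstep z hzf i y
    have h4' : ‖Pcomp m T i y - z‖^2 ≤ ‖y - z‖^2 := pow_le_pow_left₀ (norm_nonneg _) h4 2
    rw [h2] at h1'
    linarith
  -- the Lyapunov sequence
  set a : ℕ → ℝ := fun n => ‖x n - z₀‖^2 with hadef
  have hanti : Antitone a := by
    apply antitone_nat_of_succ_le
    intro n
    have := hPstep z₀ hz₀fix m (x n)
    rw [← hxsucc n] at this
    exact pow_le_pow_left₀ (norm_nonneg _) this 2
  have hbdd0 : BddBelow (Set.range a) := ⟨0, by rintro r ⟨n, rfl⟩; positivity⟩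
  have ha : Tendsto a atTop (nhds (⨅ n, a n)) := tendsto_atTop_ciInf hanti hbdd0
  have hdiff : Tendsto (fun n => a n - a (n+1)) atTop (nhds 0) := by
    have h2 : Tendsto (fun n => a (n+1)) atTop (nhds (⨅ n, a n)) :=
      ha.comp (tendsto_add_atTop_nat 1)
    simpa using ha.sub h2
  -- residuals at each stage tend to zero
  have hres : ∀ i : Fin m,
      Tendsto (fun n => Pcomp m T i (x n) - T i (Pcomp m T i (x n))) atTop (nhds 0) := by
    intro i
    have hb : ∀ n, κ i * ‖Pcomp m T i (x n) - T i (Pcomp m T i (x n))‖^2 ≤ a n - a (n+1) := by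
      intro n
      have := hstage i (x n) z₀ hz₀fix
      rw [← hxsucc n] at this
      simp only [hadef]
      linarith
    have hsq : Tendsto (fun n => ‖Pcomp m T i (x n) - T i (Pcomp m T i (x n))‖^2) atTop
        (nhds 0) := by
      apply squeeze_zero (fun n => by positivity)
        (fun n => (le_div_iff₀' (hκpos i)).mpr (hb n))
      simpa using hdiff.div_const (κ i)
    have hn : Tendsto (fun n => ‖Pcomp m T i (x n) - T i (Pcomp m T i (x n))‖) atTop (nhds 0) := by
      have h' : Tendsto (fun n => Real.sqrt (‖Pcomp m T i (x n) - T i (Pcomp m T i (x n))‖^2))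
          atTop (nhds 0) := by
        have h0 := (Real.continuous_sqrt.tendsto 0).comp hsq
        rwa [Real.sqrt_zero] at h0
      exact h'.congr fun n => Real.sqrt_sq (norm_nonneg _)
    exact tendsto_zero_iff_norm_tendsto_zero.mpr hn
  -- drift: x n - Pcomp j (x n) → 0
  have hdrift : ∀ j, Tendsto (fun n => x n - Pcomp m T j (x n)) atTop (nhds 0) := by
    intro j
    induction j with
    | zero => simp only [Pcomp, id, sub_self]; exact tendsto_const_nhds
    | succ k ih =>
      by_cases h : k < m
      · have := ih.add (hres ⟨k, h⟩)
        simp only [add_zero] at this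
        simp only [Pcomp, dif_pos h]
        apply this.congr
        intro n
        abel
      · simpa only [Pcomp, dif_neg h] using ih
  -- asymptotic regularity of x w.r.t. each T i
  have hasym : ∀ i : Fin m, Tendsto (fun n => x n - T i (x n)) atTop (nhds 0) := by
    intro i
    have h3 : Tendsto (fun n => T i (Pcomp m T i (x n)) - T i (x n)) atTop (nhds 0) := by
      have hgn : Tendsto (fun n => ‖x n - Pcomp m T i (x n)‖) atTop (nhds 0) := by
        simpa using (hdrift i).norm
      refine squeeze_zero_norm (fun n => ?_) hgn
      exact (hne i _ _).trans (le_of_eq (norm_sub_rev _ _))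
    have := ((hdrift i).add (hres i)).add h3
    simp only [add_zero] at this
    apply this.congr
    intro n
    abel
  -- boundedness of the orbit
  have hnormle : ∀ n, ‖x n - z₀‖ ≤ ‖x₀ - z₀‖ := by
    intro n
    induction n with
    | zero => exact le_refl _
    | succ k ih =>
      rw [hxsucc k]
      exact le_trans (hPstep z₀ hz₀fix m (x k)) ih
  have hbddx : Bornology.IsBounded (Set.range x) := by
    apply (Metric.isBounded_closedBall (x := z₀) (r := ‖x₀ - z₀‖)).subset
    rintro _ ⟨n, rfl⟩
    simpa [Metric.mem_closedBall, dist_eq_norm] using hnormle n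
  have hinf : ∀ i, Tendsto (fun n => infDist (x n) (Z i)) atTop (nhds 0) :=
    fun i => hbrop i x hbddx (hasym i)
  have hinfZ : Tendsto (fun n => infDist (x n) (⋂ i, Z i)) atTop (nhds 0) :=
    hbrfam x hbddx hinf
  -- Fejer monotonicity w.r.t. any point of Z
  have hfej : ∀ z ∈ ⋂ i, Z i, ∀ n k, n ≤ k → ‖x k - z‖ ≤ ‖x n - z‖ := by
    intro z hzm
    have hzf := hfixAll z hzm
    have : Antitone (fun n => ‖x n - z‖) := by
      apply antitone_nat_of_succ_le
      intro n
      rw [hxsucc n]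
      exact hPstep z hzf m (x n)
    exact fun n k h => this h
  -- Cauchy
  have hcauchy : CauchySeq x := by
    rw [Metric.cauchySeq_iff]
    intro ε hε
    have h3 : (0:ℝ) < ε/3 := by linarith
    obtain ⟨N, hN⟩ := (Metric.tendsto_atTop.mp hinfZ (ε/3) h3)
    have hNlt : infDist (x N) (⋂ i, Z i) < ε/3 := by
      have := hN N le_rfl
      rw [Real.dist_eq] at this
      have h0 : 0 ≤ infDist (x N) (⋂ i, Z i) := infDist_nonneg
      calc infDist (x N) (⋂ i, Z i) = |infDist (x N) (⋂ i, Z i) - 0| := by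
            rw [sub_zero, abs_of_nonneg h0]
        _ < ε/3 := this
    obtain ⟨z, hzm, hzd⟩ := (infDist_lt_iff ⟨z₀, hz₀⟩).mp hNlt
    refine ⟨N, fun p hp q hq => ?_⟩
    have hpz : dist (x p) z ≤ dist (x N) z := by
      rw [dist_eq_norm, dist_eq_norm]; exact hfej z hzm N p hp
    have hqz : dist (x q) z ≤ dist (x N) z := by
      rw [dist_eq_norm, dist_eq_norm]; exact hfej z hzm N q hq
    calc dist (x p) (x q) ≤ dist (x p) z + dist z (x q) := dist_triangle _ _ _
      _ = dist (x p) z + dist (x q) z := by rw [dist_comm z]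
      _ ≤ dist (x N) z + dist (x N) z := add_le_add hpz hqz
      _ < ε/3 + ε/3 := by linarith
      _ < ε := by linarith
  obtain ⟨z, hz⟩ := cauchySeq_tendsto_of_complete hcauchy
  have hZclosed : IsClosed (⋂ i, Z i) := by
    apply isClosed_iInter
    intro i
    rw [hZ i]
    have hcont : Continuous (T i) := by
      apply LipschitzWith.continuous (K := 1)
      intro u v
      rw [edist_dist, edist_dist, dist_eq_norm, dist_eq_norm]
      simp only [ENNReal.coe_one, one_mul]
      exact ENNReal.ofReal_le_ofReal (hne i u v)
    exact isClosed_eq hcont continuous_id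
  have hzmem : z ∈ ⋂ i, Z i := by
    have hcont : Tendsto (fun n => infDist (x n) (⋂ i, Z i)) atTop
        (nhds (infDist z (⋂ i, Z i))) :=
      ((continuous_infDist_pt (⋂ i, Z i)).tendsto z).comp hz
    have h0 : infDist z (⋂ i, Z i) = 0 := tendsto_nhds_unique hcont hinfZ
    exact (hZclosed.mem_iff_infDist_zero ⟨z₀, hz₀⟩).mpr h0
  exact ⟨z, hzmem, hz⟩
end

section
/- Suppose each T_i (i in a finite index set I) is boundedly linearly regular and averaged nonexpansive on a real Hilbert space X, with fixed point sets Z_i and Z = ∩_i Z_i ≠ ∅, and (Z_i)_{i∈I} is boundedly linearly regular. Let weights ω_{i,n} ∈ [0,1] with Σ_i ω_{i,n} = 1, I_n = {i : ω_{i,n} > 0}, inf_n inf_{i∈I_n} ω_{i,n} > 0, and suppose there is p ≥ 1 with I_n ∪ ⋯ ∪ I_{n+p-1} = I for all n. Then the quasi-cyclic iteration x_{n+1} = Σ_i ω_{i,n} T_i x_n converges linearly to some point in Z. -/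
open Metric Filter

section QCAux

private lemma qc_jensen_sq {ι : Type*} [Fintype ι] (ω a : ι → ℝ) (h0 : ∀ i, 0 ≤ ω i)
    (h1 : ∑ i, ω i = 1) : (∑ i, ω i * a i)^2 ≤ ∑ i, ω i * a i ^ 2 := by
  have key := Finset.sum_mul_sq_le_sq_mul_sq Finset.univ (fun i => Real.sqrt (ω i))
    (fun i => Real.sqrt (ω i) * a i)
  have e1 : ∀ i : ι, Real.sqrt (ω i) * (Real.sqrt (ω i) * a i) = ω i * a i := by
    intro i; rw [← mul_assoc, Real.mul_self_sqrt (h0 i)]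
  have e2 : ∀ i : ι, Real.sqrt (ω i) ^ 2 = ω i := fun i => Real.sq_sqrt (h0 i)
  have e3 : ∀ i : ι, (Real.sqrt (ω i) * a i) ^ 2 = ω i * a i ^ 2 := by
    intro i; rw [mul_pow, e2]
  simp only [e1, e2, e3, h1, one_mul] at key
  exact key

private lemma qc_norm_combo_sq {X : Type*} [NormedAddCommGroup X] [InnerProductSpace ℝ X]
    (a b : X) (t : ℝ) :
    ‖(1-t)•a + t•b‖^2 = (1-t)*‖a‖^2 + t*‖b‖^2 - t*(1-t)*‖a-b‖^2 := by
  have h : ∀ w : X, ‖w‖^2 = inner ℝ w w := fun w => (real_inner_self_eq_norm_sq w).symm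
  rw [h, h, h, h]
  simp only [inner_add_left, inner_add_right, inner_sub_left, inner_sub_right,
    real_inner_smul_left, real_inner_smul_right, real_inner_comm a b]
  ring

private lemma qc_averaged {X : Type*} [NormedAddCommGroup X] [InnerProductSpace ℝ X]
    (T N : X → X) (lam c : ℝ) (hlam : lam ∈ Set.Ico (0:ℝ) 1)
    (hN : ∀ a b, ‖N a - N b‖ ≤ ‖a - b‖) (hT : ∀ a, T a = (1-lam)•a + lam•N a)
    (hc : c * lam ≤ 1 - lam) (y z : X) (hz : T z = z) :
    ‖T y - z‖^2 + c * ‖y - T y‖^2 ≤ ‖y - z‖^2 := by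
  have hTy : T y - z = (1-lam)•(y-z) + lam•(N y - z) := by rw [hT y]; module
  have hdiff : (y-z) - (N y - z) = y - N y := by abel
  have h1 : ‖T y - z‖^2
      = (1-lam)*‖y-z‖^2 + lam*‖N y - z‖^2 - lam*(1-lam)*‖y - N y‖^2 := by
    rw [hTy, qc_norm_combo_sq, hdiff]
  have h3 : y - T y = lam • (y - N y) := by rw [hT y]; module
  have h4 : ‖y - T y‖^2 = lam^2 * ‖y - N y‖^2 := by
    rw [h3, norm_smul, Real.norm_eq_abs, mul_pow, sq_abs]
  have hBA : lam * ‖N y - z‖^2 ≤ lam * ‖y - z‖^2 := by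
    rcases eq_or_lt_of_le hlam.1 with h0 | h0
    · rw [← h0]; simp
    · have hE : (1-lam)•z + lam•N z = z := by rw [← hT z, hz]
      have h5 : lam • N z = lam • z := by
        have h6 : lam • N z - lam • z = ((1-lam)•z + lam•N z) - z := by module
        rw [hE, sub_self] at h6
        exact sub_eq_zero.1 h6
      have hNz : N z = z := smul_right_injective X h0.ne' h5
      have h7 : ‖N y - z‖ ≤ ‖y - z‖ := by have := hN y z; rwa [hNz] at this
      exact mul_le_mul_of_nonneg_left (pow_le_pow_left₀ (norm_nonneg _) h7 2) hlam.1
  rw [h1, h4]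
  nlinarith [mul_nonneg (mul_nonneg hlam.1 (sq_nonneg ‖y - N y‖))
      (sub_nonneg.2 hc), sq_nonneg ‖y - N y‖, hBA]

private lemma qc_le_infDist {α : Type*} [PseudoMetricSpace α] {s : Set α} (hs : s.Nonempty)
    {x : α} {b : ℝ} (h : ∀ z ∈ s, b ≤ dist x z) : b ≤ infDist x s := by
  by_contra hlt
  push_neg at hlt
  obtain ⟨y, hy, hxy⟩ := (infDist_lt_iff hs).1 hlt
  exact absurd (h y hy) (not_le.2 hxy)

end QCAux

/-- Linear convergence of the quasi-cyclic algorithm. -/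
theorem quasicyclic_algorithm_linear_convergence
    {X : Type*} [NormedAddCommGroup X] [InnerProductSpace ℝ X] [CompleteSpace X]
    {ι : Type*} [Fintype ι] [Nonempty ι]
    (T : ι → X → X)
    (havg : ∀ i, ∃ (lam : ℝ) (N : X → X), lam ∈ Set.Ico (0:ℝ) 1 ∧
      (∀ x y, ‖N x - N y‖ ≤ ‖x - y‖) ∧ ∀ x, T i x = (1 - lam) • x + lam • N x)
    (Z : ι → Set X) (hZ : ∀ i, Z i = {x | T i x = x})
    (hblrop : ∀ i, ∀ ρ > (0:ℝ), ∃ κ ≥ (0:ℝ), ∀ x : X, ‖x‖ ≤ ρ →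
      infDist x (Z i) ≤ κ * ‖x - T i x‖)
    (hZne : (⋂ i, Z i).Nonempty)
    (hblrfam : ∀ ρ > (0:ℝ), ∃ μ > (0:ℝ), ∀ x : X, ‖x‖ ≤ ρ →
      infDist x (⋂ i, Z i) ≤ μ * ⨆ i, infDist x (Z i))
    (ω : ι → ℕ → ℝ) (hω : ∀ i n, ω i n ∈ Set.Icc (0:ℝ) 1)
    (hsum : ∀ n, ∑ i, ω i n = 1)
    (hωpos : ∃ ε > (0:ℝ), ∀ i n, 0 < ω i n → ε ≤ ω i n)
    (p : ℕ) (hp : 1 ≤ p)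
    (hcover : ∀ n : ℕ, ∀ i : ι, ∃ k < p, 0 < ω i (n + k))
    (x : ℕ → X) (hx : ∀ n : ℕ, x (n + 1) = ∑ i, ω i n • T i (x n)) :
    ∃ z ∈ ⋂ i, Z i, ∃ M ≥ (0:ℝ), ∃ α ∈ Set.Ico (0:ℝ) 1,
      ∀ n : ℕ, ‖x n - z‖ ≤ M * α ^ n := by
  classical
  set Zs := ⋂ i, Z i with hZsdef
  obtain ⟨z0, hz0⟩ := hZne
  have hZne' : Zs.Nonempty := ⟨z0, hz0⟩
  choose lam N hlam hN hT using havg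
  -- uniform averagedness constant
  set c : ℝ := Finset.univ.inf' Finset.univ_nonempty (fun i => (1 - lam i)/2) with hcdef
  have hc0 : 0 < c := by
    rw [hcdef, Finset.lt_inf'_iff]
    intro i _
    have := (hlam i).2
    linarith
  have hci : ∀ i, c * lam i ≤ 1 - lam i := by
    intro i
    have h1 : c ≤ (1 - lam i)/2 := Finset.inf'_le _ (Finset.mem_univ i)
    nlinarith [mul_le_mul_of_nonneg_right h1 (hlam i).1,
      mul_nonneg (sub_nonneg.2 (hlam i).2.le)
        (by linarith [(hlam i).2] : (0:ℝ) ≤ 2 - lam i)]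
  have hK1 : ∀ i (y z : X), z ∈ Z i →
      ‖T i y - z‖^2 + c*‖y - T i y‖^2 ≤ ‖y - z‖^2 := by
    intro i y z hzi
    refine qc_averaged (T i) (N i) (lam i) c (hlam i) (hN i) (hT i) (hci i) y z ?_
    rw [hZ i] at hzi
    exact hzi
  -- one-step decrease
  have hstep : ∀ z ∈ Zs, ∀ n,
      ‖x (n+1) - z‖^2 + c * ∑ i, ω i n * ‖x n - T i (x n)‖^2 ≤ ‖x n - z‖^2 := by
    intro z hz n
    have hzi : ∀ i, z ∈ Z i := fun i => Set.mem_iInter.1 hz i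
    have hxz : x (n+1) - z = ∑ i, ω i n • (T i (x n) - z) := by
      rw [hx n]
      simp only [smul_sub, Finset.sum_sub_distrib, ← Finset.sum_smul, hsum n, one_smul]
    have h1 : ‖x (n+1) - z‖ ≤ ∑ i, ω i n * ‖T i (x n) - z‖ := by
      rw [hxz]
      refine (norm_sum_le _ _).trans_eq ?_
      exact Finset.sum_congr rfl fun i _ => by
        rw [norm_smul, Real.norm_eq_abs, abs_of_nonneg (hω i n).1]
    have h2 : ‖x (n+1) - z‖^2 ≤ ∑ i, ω i n * ‖T i (x n) - z‖^2 :=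
      (pow_le_pow_left₀ (norm_nonneg _) h1 2).trans
        (qc_jensen_sq _ _ (fun i => (hω i n).1) (hsum n))
    have h3 : ∑ i, ω i n * ‖T i (x n) - z‖^2
        ≤ ∑ i, ω i n * (‖x n - z‖^2 - c * ‖x n - T i (x n)‖^2) :=
      Finset.sum_le_sum fun i _ => mul_le_mul_of_nonneg_left
        (by linarith [hK1 i (x n) z (hzi i)]) (hω i n).1
    have h4 : ∑ i, ω i n * (‖x n - z‖^2 - c * ‖x n - T i (x n)‖^2)
        = ‖x n - z‖^2 - c * ∑ i, ω i n * ‖x n - T i (x n)‖^2 := by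
      simp only [mul_sub, Finset.sum_sub_distrib, ← Finset.sum_mul, hsum n, one_mul]
      congr 1
      rw [Finset.mul_sum]
      exact Finset.sum_congr rfl fun i _ => by ring
    linarith [h3.trans_eq h4]
  have hsum_nonneg : ∀ n, 0 ≤ ∑ i, ω i n * ‖x n - T i (x n)‖^2 :=
    fun n => Finset.sum_nonneg fun i _ => mul_nonneg (hω i n).1 (sq_nonneg _)
  -- Fejér monotonicity
  have hmono : ∀ z ∈ Zs, ∀ n, ‖x (n+1) - z‖ ≤ ‖x n - z‖ := by
    intro z hz n
    have h := hstep z hz n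
    have hsq : ‖x (n+1) - z‖^2 ≤ ‖x n - z‖^2 := by
      nlinarith [hsum_nonneg n, hc0]
    exact (abs_le_of_sq_le_sq' hsq (norm_nonneg _)).2
  have hmono' : ∀ z ∈ Zs, ∀ n m, n ≤ m → ‖x m - z‖ ≤ ‖x n - z‖ := by
    intro z hz n m hnm
    induction m, hnm using Nat.le_induction with
    | base => exact le_rfl
    | succ m hm ih => exact (hmono z hz m).trans ih
  -- boundedness
  set ρ : ℝ := ‖z0‖ + ‖x 0 - z0‖ + 1 with hρdef
  have hρ : 0 < ρ := by positivity
  have hbound : ∀ n, ‖x n‖ ≤ ρ := by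
    intro n
    have h1 : ‖x n - z0‖ ≤ ‖x 0 - z0‖ := hmono' z0 hz0 0 n (Nat.zero_le n)
    calc ‖x n‖ = ‖(x n - z0) + z0‖ := by rw [sub_add_cancel]
      _ ≤ ‖x n - z0‖ + ‖z0‖ := norm_add_le _ _
      _ ≤ ρ := by rw [hρdef]; linarith
  -- regularity constants
  choose κ hκ0 hκ using fun i => hblrop i ρ hρ
  set κm : ℝ := Finset.univ.sup' Finset.univ_nonempty κ with hκmdef
  have hκm0 : 0 ≤ κm :=
    le_trans (hκ0 (Classical.arbitrary ι)) (Finset.le_sup' κ (Finset.mem_univ _))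
  obtain ⟨μ, hμ, hμle⟩ := hblrfam ρ hρ
  obtain ⟨ε, hε, hεle⟩ := hωpos
  -- block residual sum
  set S : ℕ → ℝ := fun n => ∑ j ∈ Finset.range p,
    ∑ i, ω i (n+j) * ‖x (n+j) - T i (x (n+j))‖^2 with hSdef
  have hS0 : ∀ n, 0 ≤ S n := fun n =>
    Finset.sum_nonneg fun j _ => hsum_nonneg (n + j)
  have hStel : ∀ z ∈ Zs, ∀ n, c * S n ≤ ‖x n - z‖^2 - ‖x (n+p) - z‖^2 := by
    intro z hz n
    simp only [hSdef]
    have : ∀ k : ℕ,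
        c * (∑ j ∈ Finset.range k, ∑ i, ω i (n+j) * ‖x (n+j) - T i (x (n+j))‖^2)
          ≤ ‖x n - z‖^2 - ‖x (n+k) - z‖^2 := by
      intro k
      induction k with
      | zero => simp
      | succ k ih =>
        rw [Finset.sum_range_succ, mul_add]
        have h := hstep z hz (n+k)
        have hnk : n + (k+1) = (n+k)+1 := by omega
        rw [hnk]
        linarith
    exact this p
  have hterm : ∀ n j, j < p → ∀ i,
      ω i (n+j) * ‖x (n+j) - T i (x (n+j))‖^2 ≤ S n := by
    intro n j hj i
    have h1 : ω i (n+j) * ‖x (n+j) - T i (x (n+j))‖^2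
        ≤ ∑ i', ω i' (n+j) * ‖x (n+j) - T i' (x (n+j))‖^2 :=
      Finset.single_le_sum (f := fun i' => ω i' (n+j) * ‖x (n+j) - T i' (x (n+j))‖^2)
        (fun i' _ => mul_nonneg (hω i' _).1 (sq_nonneg _)) (Finset.mem_univ i)
    have h2 : ∑ i', ω i' (n+j) * ‖x (n+j) - T i' (x (n+j))‖^2 ≤ S n := by
      simp only [hSdef]
      exact Finset.single_le_sum
        (f := fun j => ∑ i', ω i' (n+j) * ‖x (n+j) - T i' (x (n+j))‖^2)
        (fun j' _ => hsum_nonneg (n + j')) (Finset.mem_range.2 hj)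
    exact h1.trans h2
  have hres : ∀ n j, j < p → ∀ i, 0 < ω i (n+j) →
      ‖x (n+j) - T i (x (n+j))‖ ≤ Real.sqrt (S n) / Real.sqrt ε := by
    intro n j hj i hpos
    have h1 : ε * ‖x (n+j) - T i (x (n+j))‖^2 ≤ S n :=
      le_trans (mul_le_mul_of_nonneg_right (hεle i _ hpos) (sq_nonneg _)) (hterm n j hj i)
    have h2 : ‖x (n+j) - T i (x (n+j))‖^2 ≤ S n / ε := by
      rw [le_div_iff₀ hε]; linarith
    have h3 : ‖x (n+j) - T i (x (n+j))‖ ≤ Real.sqrt (S n / ε) :=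
      (Real.le_sqrt (norm_nonneg _) (div_nonneg (hS0 n) hε.le)).2 h2
    rwa [Real.sqrt_div (hS0 n)] at h3
  have hdisp : ∀ n j, j < p →
      ‖x (n+j+1) - x (n+j)‖ ≤ (Fintype.card ι : ℝ) * Real.sqrt (S n) := by
    intro n j hj
    have hxm : x ((n+j)+1) - x (n+j) = ∑ i, ω i (n+j) • (T i (x (n+j)) - x (n+j)) := by
      rw [hx (n+j)]
      simp only [smul_sub, Finset.sum_sub_distrib, ← Finset.sum_smul, hsum (n+j), one_smul]
    have h1 : ‖x ((n+j)+1) - x (n+j)‖ ≤ ∑ i, ω i (n+j) * ‖x (n+j) - T i (x (n+j))‖ := by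
      rw [hxm]
      refine (norm_sum_le _ _).trans ?_
      refine Finset.sum_le_sum fun i _ => ?_
      rw [norm_smul, Real.norm_eq_abs, abs_of_nonneg (hω i (n+j)).1, norm_sub_rev]
    have h2 : ∀ i, ω i (n+j) * ‖x (n+j) - T i (x (n+j))‖ ≤ Real.sqrt (S n) := by
      intro i
      have hb : (ω i (n+j) * ‖x (n+j) - T i (x (n+j))‖)^2 ≤ S n := by
        nlinarith [hterm n j hj i, (hω i (n+j)).1, (hω i (n+j)).2,
          sq_nonneg (‖x (n+j) - T i (x (n+j))‖),
          mul_nonneg (mul_nonneg (sub_nonneg.2 (hω i (n+j)).2) (hω i (n+j)).1)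
            (sq_nonneg (‖x (n+j) - T i (x (n+j))‖))]
      calc ω i (n+j) * ‖x (n+j) - T i (x (n+j))‖
          ≤ |ω i (n+j) * ‖x (n+j) - T i (x (n+j))‖| := le_abs_self _
        _ = Real.sqrt ((ω i (n+j) * ‖x (n+j) - T i (x (n+j))‖)^2) :=
            (Real.sqrt_sq_eq_abs _).symm
        _ ≤ Real.sqrt (S n) := Real.sqrt_le_sqrt hb
    calc ‖x (n+j+1) - x (n+j)‖ ≤ ∑ i, ω i (n+j) * ‖x (n+j) - T i (x (n+j))‖ := h1
      _ ≤ ∑ _i : ι, Real.sqrt (S n) := Finset.sum_le_sum fun i _ => h2 i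
      _ = (Fintype.card ι : ℝ) * Real.sqrt (S n) := by
          rw [Finset.sum_const, Finset.card_univ, nsmul_eq_mul]
  have hdist : ∀ n k, k ≤ p →
      ‖x n - x (n+k)‖ ≤ (p:ℝ) * (Fintype.card ι : ℝ) * Real.sqrt (S n) := by
    intro n k hk
    have h := dist_le_range_sum_dist (fun j => x (n+j)) k
    rw [← dist_eq_norm]
    calc dist (x n) (x (n+k)) = dist (x (n+0)) (x (n+k)) := by norm_num
      _ ≤ ∑ j ∈ Finset.range k, dist (x (n+j)) (x (n+(j+1))) := h
      _ ≤ ∑ _j ∈ Finset.range k, (Fintype.card ι : ℝ) * Real.sqrt (S n) := by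
          refine Finset.sum_le_sum fun j hj => ?_
          rw [dist_eq_norm, norm_sub_rev]
          have he : n + (j+1) = n + j + 1 := by omega
          rw [he]
          exact hdisp n j (lt_of_lt_of_le (Finset.mem_range.1 hj) hk)
      _ = (k:ℝ) * ((Fintype.card ι : ℝ) * Real.sqrt (S n)) := by
          rw [Finset.sum_const, Finset.card_range, nsmul_eq_mul]
      _ ≤ (p:ℝ) * (Fintype.card ι : ℝ) * Real.sqrt (S n) := by
          have hkp : (k:ℝ) ≤ (p:ℝ) := by exact_mod_cast hk
          have hnn : (0:ℝ) ≤ (Fintype.card ι : ℝ) * Real.sqrt (S n) := by positivity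
          calc (k:ℝ) * ((Fintype.card ι : ℝ) * Real.sqrt (S n))
              ≤ (p:ℝ) * ((Fintype.card ι : ℝ) * Real.sqrt (S n)) :=
                mul_le_mul_of_nonneg_right hkp hnn
            _ = (p:ℝ) * (Fintype.card ι : ℝ) * Real.sqrt (S n) := by ring
  set K1 : ℝ := κm * (Real.sqrt ε)⁻¹ + (p:ℝ) * (Fintype.card ι : ℝ) with hK1def
  have hpc : (0:ℝ) < (p:ℝ) * (Fintype.card ι : ℝ) := by
    have h1 : (0:ℝ) < (p:ℝ) := by exact_mod_cast hp
    have h2 : (0:ℝ) < (Fintype.card ι : ℝ) := by exact_mod_cast Fintype.card_pos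
    exact mul_pos h1 h2
  have hK1pos : 0 < K1 :=
    add_pos_of_nonneg_of_pos (mul_nonneg hκm0 (inv_nonneg.2 (Real.sqrt_nonneg _))) hpc
  have hKi : ∀ n i, infDist (x n) (Z i) ≤ K1 * Real.sqrt (S n) := by
    intro n i
    obtain ⟨k, hk, hωk⟩ := hcover n i
    have h1 : infDist (x n) (Z i) ≤ infDist (x (n+k)) (Z i) + dist (x n) (x (n+k)) :=
      infDist_le_infDist_add_dist
    have h2 : infDist (x (n+k)) (Z i) ≤ κ i * ‖x (n+k) - T i (x (n+k))‖ :=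
      hκ i (x (n+k)) (hbound (n+k))
    have h4 : κ i * ‖x (n+k) - T i (x (n+k))‖ ≤ κm * (Real.sqrt (S n) / Real.sqrt ε) :=
      mul_le_mul (Finset.le_sup' κ (Finset.mem_univ i)) (hres n k hk i hωk)
        (norm_nonneg _) hκm0
    have h5 : dist (x n) (x (n+k)) ≤ (p:ℝ) * (Fintype.card ι : ℝ) * Real.sqrt (S n) := by
      rw [dist_eq_norm]
      exact hdist n k hk.le
    have h6 : κm * (Real.sqrt (S n) / Real.sqrt ε)
        = κm * (Real.sqrt ε)⁻¹ * Real.sqrt (S n) := by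
      rw [div_eq_mul_inv]; ring
    rw [hK1def]
    calc infDist (x n) (Z i)
        ≤ infDist (x (n+k)) (Z i) + dist (x n) (x (n+k)) := h1
      _ ≤ κm * (Real.sqrt ε)⁻¹ * Real.sqrt (S n)
            + (p:ℝ) * (Fintype.card ι : ℝ) * Real.sqrt (S n) := by
          rw [← h6]; linarith [h2.trans h4]
      _ = (κm * (Real.sqrt ε)⁻¹ + (p:ℝ) * (Fintype.card ι : ℝ)) * Real.sqrt (S n) := by
          ring
  have hdZ : ∀ n, infDist (x n) Zs ≤ (μ * K1) * Real.sqrt (S n) := by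
    intro n
    have hsup : (⨆ i, infDist (x n) (Z i)) ≤ K1 * Real.sqrt (S n) :=
      ciSup_le fun i => hKi n i
    calc infDist (x n) Zs ≤ μ * ⨆ i, infDist (x n) (Z i) := hμle (x n) (hbound n)
      _ ≤ μ * (K1 * Real.sqrt (S n)) := mul_le_mul_of_nonneg_left hsup hμ.le
      _ = (μ * K1) * Real.sqrt (S n) := by ring
  have hMK : 0 < μ * K1 := mul_pos hμ hK1pos
  set γ : ℝ := min (c / (μ*K1)^2) (1/2) with hγdef
  have hγpos : 0 < γ := lt_min (div_pos hc0 (pow_pos hMK 2)) one_half_pos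
  have hγhalf : γ ≤ 1/2 := min_le_right _ _
  have hγ1 : (0:ℝ) ≤ 1 - γ := by linarith
  have hkey : ∀ n, infDist (x (n+p)) Zs^2 ≤ (1 - γ) * infDist (x n) Zs^2 := by
    intro n
    have hA : ∀ z ∈ Zs,
        infDist (x (n+p)) Zs^2 + γ * infDist (x n) Zs^2 ≤ ‖x n - z‖^2 := by
      intro z hz
      have h1 : infDist (x (n+p)) Zs ≤ ‖x (n+p) - z‖ := by
        rw [← dist_eq_norm]; exact infDist_le_dist_of_mem hz
      have h1' : infDist (x (n+p)) Zs^2 ≤ ‖x (n+p) - z‖^2 :=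
        pow_le_pow_left₀ infDist_nonneg h1 2
      have h2 : infDist (x n) Zs^2 ≤ (μ*K1)^2 * S n := by
        calc infDist (x n) Zs^2 ≤ ((μ*K1)*Real.sqrt (S n))^2 :=
              pow_le_pow_left₀ infDist_nonneg (hdZ n) 2
          _ = (μ*K1)^2 * (Real.sqrt (S n))^2 := by ring
          _ = (μ*K1)^2 * S n := by rw [Real.sq_sqrt (hS0 n)]
      have h3 : c * S n ≤ ‖x n - z‖^2 - ‖x (n+p) - z‖^2 := hStel z hz n
      have h4 : γ * infDist (x n) Zs^2 ≤ c * S n := by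
        have hγle : γ ≤ c/(μ*K1)^2 := min_le_left _ _
        calc γ * infDist (x n) Zs^2
            ≤ (c/(μ*K1)^2) * infDist (x n) Zs^2 :=
              mul_le_mul_of_nonneg_right hγle (sq_nonneg _)
          _ ≤ (c/(μ*K1)^2) * ((μ*K1)^2 * S n) :=
              mul_le_mul_of_nonneg_left h2 (div_nonneg hc0.le (sq_nonneg _))
          _ = c * S n := by field_simp
      linarith
    have hAnn : 0 ≤ infDist (x (n+p)) Zs^2 + γ * infDist (x n) Zs^2 := by positivity
    have hsq : Real.sqrt (infDist (x (n+p)) Zs^2 + γ * infDist (x n) Zs^2)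
        ≤ infDist (x n) Zs := by
      refine qc_le_infDist hZne' fun z hz => ?_
      rw [dist_eq_norm]
      calc Real.sqrt (infDist (x (n+p)) Zs^2 + γ * infDist (x n) Zs^2)
          ≤ Real.sqrt (‖x n - z‖^2) := Real.sqrt_le_sqrt (hA z hz)
        _ = ‖x n - z‖ := Real.sqrt_sq (norm_nonneg _)
    have h5 := pow_le_pow_left₀ (Real.sqrt_nonneg _) hsq 2
    rw [Real.sq_sqrt hAnn] at h5
    linarith
  set β : ℝ := Real.sqrt (1-γ) with hβdef
  have hβpos : 0 < β := Real.sqrt_pos.2 (by linarith)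
  have hβ0 : 0 ≤ β := hβpos.le
  have hβ1 : β < 1 := by
    rw [hβdef]
    calc Real.sqrt (1-γ) < Real.sqrt 1 := Real.sqrt_lt_sqrt hγ1 (by linarith)
      _ = 1 := Real.sqrt_one
  have hcontr : ∀ n, infDist (x (n+p)) Zs ≤ β * infDist (x n) Zs := by
    intro n
    have h1 : infDist (x (n+p)) Zs^2 ≤ (β * infDist (x n) Zs)^2 := by
      have he : (β * infDist (x n) Zs)^2 = (1-γ) * infDist (x n) Zs^2 := by
        rw [mul_pow, hβdef, Real.sq_sqrt hγ1]
      rw [he]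
      exact hkey n
    exact (abs_le_of_sq_le_sq' h1 (mul_nonneg hβ0 infDist_nonneg)).2
  have hdmono : ∀ n, infDist (x (n+1)) Zs ≤ infDist (x n) Zs := by
    intro n
    refine qc_le_infDist hZne' fun z hz => ?_
    calc infDist (x (n+1)) Zs ≤ dist (x (n+1)) z := infDist_le_dist_of_mem hz
      _ ≤ dist (x n) z := by
          rw [dist_eq_norm, dist_eq_norm]; exact hmono z hz n
  have hdmono' : ∀ n m, n ≤ m → infDist (x m) Zs ≤ infDist (x n) Zs := by
    intro n m hnm
    induction m, hnm using Nat.le_induction with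
    | base => exact le_rfl
    | succ m hm ih => exact (hdmono m).trans ih
  set d0 : ℝ := infDist (x 0) Zs with hd0def
  have hd00 : 0 ≤ d0 := infDist_nonneg
  have hgeo : ∀ n, infDist (x n) Zs ≤ d0 * β ^ (n / p) := by
    intro n
    induction n using Nat.strong_induction_on with
    | _ n ih =>
      rcases lt_or_ge n p with h | h
      · rw [Nat.div_eq_of_lt h, pow_zero, mul_one]
        exact hdmono' 0 n (Nat.zero_le n)
      · have hn : n = (n - p) + p := by omega
        have hdiv : n / p = (n - p)/p + 1 := Nat.div_eq_sub_div (by omega) h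
        calc infDist (x n) Zs = infDist (x ((n-p)+p)) Zs := by rw [← hn]
          _ ≤ β * infDist (x (n-p)) Zs := hcontr (n-p)
          _ ≤ β * (d0 * β^((n-p)/p)) :=
              mul_le_mul_of_nonneg_left (ih (n-p) (by omega)) hβ0
          _ = d0 * β^((n-p)/p + 1) := by rw [pow_succ]; ring
          _ = d0 * β^(n/p) := by rw [hdiv]
  have hcau : ∀ n m, ‖x (n+m) - x n‖ ≤ 2 * infDist (x n) Zs := by
    intro n m
    have h : ∀ z ∈ Zs, (2:ℝ)⁻¹ * ‖x (n+m) - x n‖ ≤ dist (x n) z := by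
      intro z hz
      have h1 : ‖x (n+m) - z‖ ≤ ‖x n - z‖ := hmono' z hz n (n+m) (by omega)
      have h2 : dist (x (n+m)) (x n) ≤ dist (x (n+m)) z + dist z (x n) :=
        dist_triangle _ _ _
      rw [dist_eq_norm, dist_eq_norm, dist_eq_norm] at h2
      rw [dist_eq_norm]
      have h3 : ‖z - x n‖ = ‖x n - z‖ := norm_sub_rev _ _
      rw [h3] at h2
      linarith
    have := qc_le_infDist hZne' h
    linarith
  have hxle : ∀ N n, N ≤ n → dist (x n) (x N) ≤ 2 * (d0 * β^(N/p)) := by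
    intro N n hNn
    obtain ⟨m, rfl⟩ := Nat.exists_eq_add_of_le hNn
    rw [dist_eq_norm]
    calc ‖x (N+m) - x N‖ ≤ 2 * infDist (x N) Zs := hcau N m
      _ ≤ 2 * (d0*β^(N/p)) := by linarith [hgeo N]
  have htend : Tendsto (fun N : ℕ => β ^ (N/p)) atTop (nhds 0) := by
    have h1 : Tendsto (fun k : ℕ => β ^ k) atTop (nhds 0) :=
      tendsto_pow_atTop_nhds_zero_of_lt_one hβ0 hβ1
    have h2 : Tendsto (fun N : ℕ => N / p) atTop atTop := by
      refine tendsto_atTop_atTop.2 fun K => ⟨p*K, fun n hn => ?_⟩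
      have hKp : K * p ≤ n := by rw [Nat.mul_comm]; exact hn
      exact (Nat.le_div_iff_mul_le (by omega)).2 hKp
    exact h1.comp h2
  have hcauchy : CauchySeq x := by
    refine cauchySeq_of_le_tendsto_0 (fun N => 4 * (d0 * β^(N/p))) ?_ ?_
    · intro n m N hn hm
      calc dist (x n) (x m) ≤ dist (x n) (x N) + dist (x N) (x m) :=
            dist_triangle _ _ _
        _ ≤ 2 * (d0 * β^(N/p)) + 2 * (d0 * β^(N/p)) := by
            refine add_le_add (hxle N n hn) ?_
            rw [dist_comm]
            exact hxle N m hm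
        _ = 4 * (d0 * β^(N/p)) := by ring
    · have := htend.const_mul (4*d0)
      rw [mul_zero] at this
      refine this.congr fun N => by ring
  obtain ⟨zb, hzb⟩ := cauchySeq_tendsto_of_complete hcauchy
  have hTcont : ∀ i, Continuous (T i) := by
    intro i
    have hNc : Continuous (N i) := by
      have hl : LipschitzWith 1 (N i) := by
        refine LipschitzWith.of_dist_le_mul fun a b => ?_
        rw [dist_eq_norm, dist_eq_norm]
        simpa using hN i a b
      exact hl.continuous
    have he : (fun a => (1 - lam i) • a + lam i • N i a) = T i :=
      funext fun a => (hT i a).symm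
    rw [← he]
    exact (continuous_const.smul continuous_id).add (continuous_const.smul hNc)
  have hcl : IsClosed Zs := by
    rw [hZsdef]
    exact isClosed_iInter fun i => by
      rw [hZ i]; exact isClosed_eq (hTcont i) continuous_id
  have hdtend : Tendsto (fun n => infDist (x n) Zs) atTop (nhds 0) := by
    refine squeeze_zero (fun n => infDist_nonneg) (fun n => hgeo n) ?_
    have := htend.const_mul d0
    rw [mul_zero] at this
    exact this
  have hzbZ : zb ∈ Zs := by
    rw [hcl.mem_iff_infDist_zero hZne']
    have h1 : Tendsto (fun n => infDist (x n) Zs) atTop (nhds (infDist zb Zs)) :=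
      ((continuous_infDist_pt Zs).tendsto zb).comp hzb
    exact tendsto_nhds_unique h1 hdtend
  have hfin : ∀ n, ‖x n - zb‖ ≤ 2 * (d0 * β^(n/p)) := by
    intro n
    have h2 : Tendsto (fun m => x (n+m)) atTop (nhds zb) :=
      hzb.comp (tendsto_atTop_atTop.2 fun K => ⟨K, fun m hm => by omega⟩)
    have h1 : Tendsto (fun m => ‖x (n+m) - x n‖) atTop (nhds ‖zb - x n‖) :=
      (h2.sub tendsto_const_nhds).norm
    have h3 : ∀ m, ‖x (n+m) - x n‖ ≤ 2*(d0*β^(n/p)) :=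
      fun m => (hcau n m).trans (by linarith [hgeo n])
    have h4 := le_of_tendsto h1 (Eventually.of_forall h3)
    rwa [norm_sub_rev] at h4
  refine ⟨zb, hzbZ, 2*d0/β, by positivity, β ^ ((p:ℝ)⁻¹),
    ⟨Real.rpow_nonneg hβ0 _, Real.rpow_lt_one hβ0 hβ1 (by positivity)⟩, ?_⟩
  intro n
  have hα : (β ^ ((p:ℝ)⁻¹))^n = β ^ ((p:ℝ)⁻¹ * n) := by
    rw [← Real.rpow_natCast (β ^ ((p:ℝ)⁻¹)) n, ← Real.rpow_mul hβ0]
  have hppos : (0:ℝ) < (p:ℝ) := by exact_mod_cast hp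
  have hexp : β ^ (n/p : ℕ) ≤ β ^ ((p:ℝ)⁻¹ * n) / β := by
    have h2 : ((p:ℝ)⁻¹ * n) - 1 ≤ ((n/p : ℕ) : ℝ) := by
      have hmod : p * (n/p) + n % p = n := Nat.div_add_mod n p
      have hplt : (n % p : ℕ) < p := Nat.mod_lt _ (by omega)
      have hlt : (n:ℝ) < (p:ℝ) * ((n/p : ℕ):ℝ) + (p:ℝ) := by
        have : (n:ℝ) = (p:ℝ) * ((n/p:ℕ):ℝ) + ((n % p : ℕ):ℝ) := by
          exact_mod_cast hmod.symm
        rw [this]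
        have : ((n % p : ℕ):ℝ) < (p:ℝ) := by exact_mod_cast hplt
        linarith
      rw [inv_mul_eq_div, sub_le_iff_le_add, div_le_iff₀ hppos]
      linarith [hlt]
    calc β ^ (n/p:ℕ) = β ^ (((n/p:ℕ)):ℝ) := (Real.rpow_natCast β _).symm
      _ ≤ β ^ (((p:ℝ)⁻¹ * n) - 1) := Real.rpow_le_rpow_of_exponent_ge hβpos hβ1.le h2
      _ = β ^ ((p:ℝ)⁻¹*n) / β := by rw [Real.rpow_sub hβpos, Real.rpow_one]
  have hmul := mul_le_mul_of_nonneg_left hexp (by positivity : (0:ℝ) ≤ 2*d0)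
  calc ‖x n - zb‖ ≤ 2*(d0*β^(n/p)) := hfin n
    _ ≤ 2*d0 * (β ^ ((p:ℝ)⁻¹ * n) / β) := by linarith [hmul]
    _ = (2*d0/β) * (β ^ ((p:ℝ)⁻¹))^n := by
        rw [hα]; field_simp
end
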